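/- arXiv:1802.02982 — 3 statements merged into one kernel-verified Lean document; each statement's English description precedes it below -/
import Mathlib

section
/- Let G be a nonempty simple 3-regular graph with girth at least 5 such that κ_{1/4}(x,y) = 0 (equivalently W_1(μ_x^{1/4}, μ_y^{1/4}) = 1) for every edge xy. Then the girth of G is exactly 5. -/
open scoped ENNReal

namespace RicciFlatCubic

variable {V : Type*}

/-- The probability measure `μ_x^p` on the vertex set: mass `p` at `x`,
mass `(1-p)/deg x` at each neighbor of `x`, and `0` elsewhere. -/
noncomputable def muMeasure (G : SimpleGraph V) [G.LocallyFinite] (p : ℝ≥0∞) (x : V) :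
    V → ℝ≥0∞ := fun z =>
  haveI : DecidableEq V := Classical.decEq V
  haveI : Decidable (G.Adj x z) := Classical.dec _
  if z = x then p
  else if G.Adj x z then (1 - p) / (G.degree x : ℝ≥0∞)
  else 0

/-- `π : V × V → [0,1]` is a transport plan from `μ₁` to `μ₂` if its marginals are `μ₁`, `μ₂`. -/
def IsTransportPlan (μ₁ μ₂ : V → ℝ≥0∞) (π : V → V → ℝ≥0∞) : Prop :=
  (∀ u v, π u v ≤ 1) ∧ (∀ u, ∑' v, π u v = μ₁ u) ∧ (∀ v, ∑' u, π u v = μ₂ v)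

/-- The Wasserstein distance `W₁(μ₁, μ₂)`: the infimum over all transport plans of the
transport cost `∑ d(u,v) π(u,v)`, where `d` is the shortest-path distance in `G`. -/
noncomputable def W1 (G : SimpleGraph V) (μ₁ μ₂ : V → ℝ≥0∞) : ℝ≥0∞ :=
  ⨅ π : {π : V → V → ℝ≥0∞ // IsTransportPlan μ₁ μ₂ π},
    ∑' q : V × V, (G.dist q.1 q.2 : ℝ≥0∞) * π.1 q.1 q.2

/-- The `p`-Ollivier-Ricci curvature `κ_p(x,y) = 1 - W₁(μ_x^p, μ_y^p)` (as a real number),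
for a real idleness parameter `p`. -/
noncomputable def kappa (G : SimpleGraph V) [G.LocallyFinite] (p : ℝ) (x y : V) : ℝ :=
  1 - (W1 G (muMeasure G (ENNReal.ofReal p) x) (muMeasure G (ENNReal.ofReal p) y)).toReal

/-- The edge `xy` lies on two 5-cycles whose vertex sets intersect exactly in `{x, y}`. -/
def TwoPentagons (G : SimpleGraph V) (x y : V) : Prop :=
  ∃ P₁ P₂ : G.Walk x x, P₁.IsCycle ∧ P₂.IsCycle ∧ P₁.length = 5 ∧ P₂.length = 5 ∧
    s(x, y) ∈ P₁.edges ∧ s(x, y) ∈ P₂.edges ∧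
    {v | v ∈ P₁.support} ∩ {v | v ∈ P₂.support} = {x, y}

/-- The Petersen graph as the Kneser graph `K(5,2)`. -/
def petersen : SimpleGraph {s : Finset (Fin 5) // s.card = 2} where
  Adj a b := Disjoint a.1 b.1
  symm := ⟨fun _ _ h => h.symm⟩
  loopless := ⟨by
    rintro ⟨s, hs⟩ h
    rw [disjoint_self] at h
    simp only [Finset.bot_eq_empty] at h
    simp [h] at hs⟩

/-- The Triplex: a 12-cycle on `ℤ/12ℤ` together with six chords. -/
def triplex : SimpleGraph (ZMod 12) :=
  SimpleGraph.fromRel fun i j =>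
    j = i + 1 ∨ (i = 1 ∧ j = 7) ∨ (i = 2 ∧ j = 10) ∨ (i = 3 ∧ j = 8) ∨
      (i = 4 ∧ j = 12) ∨ (i = 5 ∧ j = 9) ∨ (i = 6 ∧ j = 11)

/-- The dodecahedral graph: layer `0` is the outer 5-cycle `a`, layers `1`, `2` form the
middle 10-cycle `b₁ c₁ b₂ c₂ … b₅ c₅`, layer `3` is the inner 5-cycle `d`. -/
def dodecahedral : SimpleGraph (Fin 4 × ZMod 5) :=
  SimpleGraph.fromRel fun p q =>
    (p.1 = 0 ∧ q.1 = 0 ∧ q.2 = p.2 + 1) ∨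
    (p.1 = 0 ∧ q.1 = 1 ∧ q.2 = p.2) ∨
    (p.1 = 1 ∧ q.1 = 2 ∧ q.2 = p.2) ∨
    (p.1 = 2 ∧ q.1 = 1 ∧ q.2 = p.2 + 1) ∨
    (p.1 = 2 ∧ q.1 = 3 ∧ q.2 = p.2) ∨
    (p.1 = 3 ∧ q.1 = 3 ∧ q.2 = p.2 + 1)

/-- The half-dodecahedral graph: inner 5-cycle `y` (`Sum.inl`), outer 10-cycle `x`
(`Sum.inr`), and spokes `yᵢ ~ x_{2i-1}`. -/
def halfDodecahedral : SimpleGraph (ZMod 5 ⊕ ZMod 10) :=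
  SimpleGraph.fromRel fun p q =>
    (∃ i : ZMod 5, p = Sum.inl i ∧ q = Sum.inl (i + 1)) ∨
    (∃ j : ZMod 10, p = Sum.inr j ∧ q = Sum.inr (j + 1)) ∨
    (∃ i : ZMod 5, p = Sum.inl i ∧ q = Sum.inr (2 * (i.val : ZMod 10) - 1))

/-- The two-sided infinite path on `ℤ`. -/
def infinitePath : SimpleGraph ℤ := SimpleGraph.fromRel fun i j => j = i + 1

/-- The cycle `Cₙ` on `ℤ/nℤ`. -/
def cycleZMod (n : ℕ) : SimpleGraph (ZMod n) := SimpleGraph.fromRel fun i j => j = i + 1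

noncomputable instance (v : {s : Finset (Fin 5) // s.card = 2}) :
    Fintype (petersen.neighborSet v) := (Set.toFinite _).fintype

noncomputable instance (v : ZMod 12) : Fintype (triplex.neighborSet v) :=
  (Set.toFinite _).fintype

noncomputable instance (v : Fin 4 × ZMod 5) : Fintype (dodecahedral.neighborSet v) :=
  (Set.toFinite _).fintype


section AuxLemmas

variable {G : SimpleGraph V}

open SimpleGraph

lemma no_cycle3 (h : 4 ≤ G.egirth) {a b c : V} (hab : G.Adj a b) (hbc : G.Adj b c)
    (hca : G.Adj c a) : False := by
  have hcyc : (Walk.cons hab (Walk.cons hbc (Walk.cons hca Walk.nil))).IsCycle := by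
    simp [Walk.isCycle_def, Walk.isTrail_def, Sym2.eq_iff, hab.ne, hbc.ne, hca.ne,
      hab.ne', hbc.ne', hca.ne']
  have := le_egirth.mp h _ _ hcyc
  norm_num [Walk.length_cons] at this

lemma no_cycle4 (h : 5 ≤ G.egirth) {a b c d : V} (hab : G.Adj a b) (hbc : G.Adj b c)
    (hcd : G.Adj c d) (hda : G.Adj d a) (hac : a ≠ c) (hbd : b ≠ d) : False := by
  have hcyc : (Walk.cons hab (Walk.cons hbc (Walk.cons hcd (Walk.cons hda Walk.nil)))).IsCycle := by
    simp [Walk.isCycle_def, Walk.isTrail_def, Sym2.eq_iff, hab.ne, hbc.ne, hcd.ne, hda.ne,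
      hab.ne', hbc.ne', hcd.ne', hda.ne', hac, hbd, hac.symm, hbd.symm]
  have := le_egirth.mp h _ _ hcyc
  norm_num [Walk.length_cons] at this

lemma no_cycle5 (h : 6 ≤ G.egirth) {a b c d e : V} (hab : G.Adj a b) (hbc : G.Adj b c)
    (hcd : G.Adj c d) (hde : G.Adj d e) (hea : G.Adj e a)
    (hac : a ≠ c) (had : a ≠ d) (hbd : b ≠ d) (hbe : b ≠ e) (hce : c ≠ e) : False := by
  have hcyc : (Walk.cons hab (Walk.cons hbc (Walk.cons hcd (Walk.cons hde
      (Walk.cons hea Walk.nil))))).IsCycle := by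
    simp [Walk.isCycle_def, Walk.isTrail_def, Sym2.eq_iff, hab.ne, hbc.ne, hcd.ne, hde.ne,
      hea.ne, hab.ne', hbc.ne', hcd.ne', hde.ne', hea.ne', hac, had, hbd, hbe, hce,
      hac.symm, had.symm, hbd.symm, hbe.symm, hce.symm]
  have := le_egirth.mp h _ _ hcyc
  norm_num [Walk.length_cons] at this

lemma two_le_dist {u v : V} (hr : G.Reachable u v) (hne : u ≠ v) (hadj : ¬ G.Adj u v) :
    2 ≤ G.dist u v := by
  have h0 : G.dist u v ≠ 0 := dist_ne_zero_iff_ne_and_reachable.mpr ⟨hne, hr⟩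
  have h1 : G.dist u v ≠ 1 := fun h => hadj (dist_eq_one_iff_adj.mp h)
  omega

lemma three_le_dist {u v : V} (hr : G.Reachable u v) (hne : u ≠ v) (hadj : ¬ G.Adj u v)
    (hmid : ∀ m, G.Adj u m → G.Adj m v → False) : 3 ≤ G.dist u v := by
  by_contra hcon
  push_neg at hcon
  obtain ⟨w, hw⟩ := hr.exists_walk_length_eq_dist
  have h2 := two_le_dist hr hne hadj
  have hlen : w.length = 2 := by omega
  cases w with
  | nil => simp at hlen
  | cons h1 p =>
    cases p with
    | nil => simp at hlen
    | cons h2' q =>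
      cases q with
      | nil => exact hmid _ h1 h2'
      | cons h3 r => simp [Walk.length_cons] at hlen

lemma plan_cost_ge (G : SimpleGraph V) {μ₁ μ₂ : V → ℝ≥0∞} {π : V → V → ℝ≥0∞}
    (hπ : IsTransportPlan μ₁ μ₂ π) (f : V → ℝ≥0∞)
    (hf : ∀ u v, π u v ≠ 0 → f u ≤ f v + (G.dist u v : ℝ≥0∞)) :
    ∑' u, f u * μ₁ u ≤ (∑' v, f v * μ₂ v) +
      ∑' q : V × V, (G.dist q.1 q.2 : ℝ≥0∞) * π q.1 q.2 := by
  have key : ∑' u, f u * μ₁ u = ∑' q : V × V, f q.1 * π q.1 q.2 := by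
    rw [ENNReal.tsum_prod']
    simp_rw [ENNReal.tsum_mul_left, hπ.2.1]
  have key2 : ∑' q : V × V, f q.2 * π q.1 q.2 = ∑' v, f v * μ₂ v := by
    rw [ENNReal.tsum_prod']
    rw [ENNReal.tsum_comm]
    simp_rw [ENNReal.tsum_mul_left, hπ.2.2]
  calc ∑' u, f u * μ₁ u = ∑' q : V × V, f q.1 * π q.1 q.2 := key
    _ ≤ ∑' q : V × V, (f q.2 + (G.dist q.1 q.2 : ℝ≥0∞)) * π q.1 q.2 := by
        apply ENNReal.tsum_le_tsum
        intro q
        rcases eq_or_ne (π q.1 q.2) 0 with h | h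
        · simp [h]
        · exact mul_le_mul_left (hf _ _ h) _
    _ = (∑' q : V × V, f q.2 * π q.1 q.2) +
        ∑' q : V × V, (G.dist q.1 q.2 : ℝ≥0∞) * π q.1 q.2 := by
        rw [← ENNReal.tsum_add]
        simp_rw [add_mul]
    _ = _ := by rw [key2]

lemma quarter_val : ((1 : ℝ≥0∞) - 1/4) / ((3 : ℕ) : ℝ≥0∞) = 1/4 := by
  have h1 : (1:ℝ≥0∞) - 1/4 = 3/4 := by
    rw [ENNReal.sub_eq_of_eq_add (by norm_num)]
    rw [← ENNReal.add_div]
    norm_num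
    rw [ENNReal.div_self] <;> norm_num
  rw [h1, show ((3:ℕ):ℝ≥0∞) = 3 by norm_num, div_eq_mul_inv, div_eq_mul_inv, mul_right_comm,
    ENNReal.mul_inv_cancel (by norm_num) (by norm_num), one_mul, one_div]

end AuxLemmas

set_option maxHeartbeats 2000000 in
theorem egirth_eq_five {V : Type*} [Nonempty V] (G : SimpleGraph V) [G.LocallyFinite]
    (hreg : G.IsRegularOfDegree 3) (hgirth : 5 ≤ G.egirth)
    (hflat : ∀ x y : V, G.Adj x y →
      W1 G (muMeasure G (1/4) x) (muMeasure G (1/4) y) = 1) :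
    G.egirth = 5 := by
  classical
  by_contra hne
  have h6 : 6 ≤ G.egirth := by
    have h5lt : 5 < G.egirth := lt_of_le_of_ne hgirth (Ne.symm hne)
    exact (by norm_num : (6:ℕ∞) = 5 + 1) ▸ Order.add_one_le_of_lt h5lt
  have h4 : 4 ≤ G.egirth := le_trans (by norm_num) h6
  have h5 : 5 ≤ G.egirth := hgirth
  obtain ⟨x⟩ := ‹Nonempty V›
  have hdegx : (G.neighborFinset x).card = 3 := hreg x
  have hxnonempty : (G.neighborFinset x).Nonempty := by
    rw [← Finset.card_pos, hdegx]; norm_num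
  obtain ⟨y, hy⟩ := hxnonempty
  have hxy : G.Adj x y := by rwa [SimpleGraph.mem_neighborFinset] at hy
  have hdegy : (G.neighborFinset y).card = 3 := hreg y
  -- pick a, b : the other two neighbors of x
  have hcard2x : ((G.neighborFinset x).erase y).card = 2 := by
    rw [Finset.card_erase_of_mem hy, hdegx]
  obtain ⟨a, ha, b, hb, hab⟩ := Finset.one_lt_card.mp (by rw [hcard2x]; norm_num)
  have hay : a ≠ y := (Finset.mem_erase.mp ha).1
  have hby : b ≠ y := (Finset.mem_erase.mp hb).1
  have hxa : G.Adj x a := by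
    have := (Finset.mem_erase.mp ha).2; rwa [SimpleGraph.mem_neighborFinset] at this
  have hxb : G.Adj x b := by
    have := (Finset.mem_erase.mp hb).2; rwa [SimpleGraph.mem_neighborFinset] at this
  -- pick c, d : the other two neighbors of y
  have hyx : x ∈ G.neighborFinset y := by rw [SimpleGraph.mem_neighborFinset]; exact hxy.symm
  have hcard2y : ((G.neighborFinset y).erase x).card = 2 := by
    rw [Finset.card_erase_of_mem hyx, hdegy]
  obtain ⟨c, hc, d, hd, hcd⟩ := Finset.one_lt_card.mp (by rw [hcard2y]; norm_num)
  have hcx : c ≠ x := (Finset.mem_erase.mp hc).1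
  have hdx : d ≠ x := (Finset.mem_erase.mp hd).1
  have hyc : G.Adj y c := by
    have := (Finset.mem_erase.mp hc).2; rwa [SimpleGraph.mem_neighborFinset] at this
  have hyd : G.Adj y d := by
    have := (Finset.mem_erase.mp hd).2; rwa [SimpleGraph.mem_neighborFinset] at this
  -- non-adjacency facts (girth ≥ 5 kills triangles/squares; ≥ 6 kills pentagons)
  have hnay : ¬ G.Adj a y := fun h => no_cycle3 h4 hxy h.symm hxa.symm
  have hnby : ¬ G.Adj b y := fun h => no_cycle3 h4 hxy h.symm hxb.symm
  have hnxc : ¬ G.Adj x c := fun h => no_cycle3 h4 hxy hyc h.symm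
  have hnxd : ¬ G.Adj x d := fun h => no_cycle3 h4 hxy hyd h.symm
  have hac : a ≠ c := fun h => no_cycle3 h4 hxy hyc (h ▸ hxa.symm)
  have had : a ≠ d := fun h => no_cycle3 h4 hxy hyd (h ▸ hxa.symm)
  have hbc : b ≠ c := fun h => no_cycle3 h4 hxy hyc (h ▸ hxb.symm)
  have hbd : b ≠ d := fun h => no_cycle3 h4 hxy hyd (h ▸ hxb.symm)
  have hnac : ¬ G.Adj a c := fun h => no_cycle4 h5 hxa h hyc.symm hxy.symm hcx.symm hay
  have hnad : ¬ G.Adj a d := fun h => no_cycle4 h5 hxa h hyd.symm hxy.symm hdx.symm hay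
  have hnbc : ¬ G.Adj b c := fun h => no_cycle4 h5 hxb h hyc.symm hxy.symm hcx.symm hby
  have hnbd : ¬ G.Adj b d := fun h => no_cycle4 h5 hxb h hyd.symm hxy.symm hdx.symm hby
  -- no common neighbors (girth ≥ 6)
  have hmid : ∀ u w : V, G.Adj x u → G.Adj y w → ¬ G.Adj x w → ¬ G.Adj u y → u ≠ w →
      x ≠ w → u ≠ y → ∀ m, G.Adj u m → G.Adj m w → False := by
    intro u w hxu hyw hnxw hnuy huw hxw huy m hum hmw
    by_cases hmx : m = x
    · exact hnxw (hmx ▸ hmw)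
    by_cases hmy : m = y
    · exact hnuy (hmy ▸ hum)
    exact no_cycle5 h6 hxu hum hmw hyw.symm hxy.symm (Ne.symm hmx) hxw huw huy hmy
  -- distance facts
  have hd_xy : G.dist x y = 1 := SimpleGraph.dist_eq_one_iff_adj.mpr hxy
  have hd_ax : G.dist a x = 1 := SimpleGraph.dist_eq_one_iff_adj.mpr hxa.symm
  have hd_bx : G.dist b x = 1 := SimpleGraph.dist_eq_one_iff_adj.mpr hxb.symm
  have hd_yc : G.dist y c = 1 := SimpleGraph.dist_eq_one_iff_adj.mpr hyc
  have hd_yd : G.dist y d = 1 := SimpleGraph.dist_eq_one_iff_adj.mpr hyd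
  have h2xc : 2 ≤ G.dist x c := two_le_dist (hxy.reachable.trans hyc.reachable) (Ne.symm hcx) hnxc
  have h2xd : 2 ≤ G.dist x d := two_le_dist (hxy.reachable.trans hyd.reachable) (Ne.symm hdx) hnxd
  have h2ay : 2 ≤ G.dist a y := two_le_dist (hxa.symm.reachable.trans hxy.reachable) hay hnay
  have h2by : 2 ≤ G.dist b y := two_le_dist (hxb.symm.reachable.trans hxy.reachable) hby hnby
  have h3ac : 3 ≤ G.dist a c :=
    three_le_dist (hxa.symm.reachable.trans (hxy.reachable.trans hyc.reachable)) hac hnac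
      (hmid a c hxa hyc hnxc hnay hac (Ne.symm hcx) hay)
  have h3ad : 3 ≤ G.dist a d :=
    three_le_dist (hxa.symm.reachable.trans (hxy.reachable.trans hyd.reachable)) had hnad
      (hmid a d hxa hyd hnxd hnay had (Ne.symm hdx) hay)
  have h3bc : 3 ≤ G.dist b c :=
    three_le_dist (hxb.symm.reachable.trans (hxy.reachable.trans hyc.reachable)) hbc hnbc
      (hmid b c hxb hyc hnxc hnby hbc (Ne.symm hcx) hby)
  have h3bd : 3 ≤ G.dist b d :=
    three_le_dist (hxb.symm.reachable.trans (hxy.reachable.trans hyd.reachable)) hbd hnbd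
      (hmid b d hxb hyd hnxd hnby hbd (Ne.symm hdx) hby)
  -- neighborhoods
  have hNx : G.neighborFinset x = {y, a, b} := by
    refine (Finset.eq_of_subset_of_card_le ?_ ?_).symm
    · intro z hz
      simp only [Finset.mem_insert, Finset.mem_singleton] at hz
      rcases hz with rfl | rfl | rfl
      · exact hy
      · rwa [SimpleGraph.mem_neighborFinset]
      · rwa [SimpleGraph.mem_neighborFinset]
    · rw [hdegx, Finset.card_insert_of_notMem (by simp [Ne.symm hay, Ne.symm hby]),
        Finset.card_insert_of_notMem (by simp [hab]), Finset.card_singleton]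
  have hNy : G.neighborFinset y = {x, c, d} := by
    refine (Finset.eq_of_subset_of_card_le ?_ ?_).symm
    · intro z hz
      simp only [Finset.mem_insert, Finset.mem_singleton] at hz
      rcases hz with rfl | rfl | rfl
      · exact hyx
      · rwa [SimpleGraph.mem_neighborFinset]
      · rwa [SimpleGraph.mem_neighborFinset]
    · rw [hdegy, Finset.card_insert_of_notMem (by simp [Ne.symm hcx, Ne.symm hdx]),
        Finset.card_insert_of_notMem (by simp [hcd]), Finset.card_singleton]
  -- the measures take value 1/4 on the closed neighborhoods
  have hmu_self : ∀ z : V, muMeasure G (1/4) z z = 1/4 := by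
    intro z; simp [muMeasure]
  have hmu_adj : ∀ z u : V, G.Adj z u → muMeasure G (1/4) z u = 1/4 := by
    intro z u h
    have hne : u ≠ z := h.ne'
    simp only [muMeasure, if_neg hne, if_pos h, hreg z, quarter_val]
  have hmu_zero : ∀ z u : V, u ≠ z → ¬ G.Adj z u → muMeasure G (1/4) z u = 0 := by
    intro z u h1 h2
    simp only [muMeasure, if_neg h1, if_neg h2]
  -- the 1-Lipschitz witness function
  set fn : V → ℕ := fun v =>
    if v = a then 3 else if v = b then 3 else if v = x then 2 else if v = y then 1 else 0
    with hfn_def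
  have hfa : fn a = 3 := by simp [hfn_def]
  have hfb : fn b = 3 := by simp [hfn_def, Ne.symm hab]
  have hfx : fn x = 2 := by simp [hfn_def, hxa.ne, hxb.ne]
  have hfy : fn y = 1 := by simp [hfn_def, Ne.symm hay, Ne.symm hby, hxy.ne']
  have hfc : fn c = 0 := by simp [hfn_def, Ne.symm hac, Ne.symm hbc, hcx, hyc.ne']
  have hfd : fn d = 0 := by simp [hfn_def, Ne.symm had, Ne.symm hbd, hdx, hyd.ne']
  set f : V → ℝ≥0∞ := fun v => ((fn v : ℕ) : ℝ≥0∞) with hf_def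
  -- the two weighted sums
  have hvanx : ∀ u : V, u ∉ ({x, y, a, b} : Finset V) → f u * muMeasure G (1/4) x u = 0 := by
    intro u hu
    simp only [Finset.mem_insert, Finset.mem_singleton, not_or] at hu
    obtain ⟨h1, h2, h3, h4⟩ := hu
    have hnadj : ¬ G.Adj x u := by
      intro h
      have : u ∈ G.neighborFinset x := by rwa [SimpleGraph.mem_neighborFinset]
      rw [hNx] at this
      simp only [Finset.mem_insert, Finset.mem_singleton] at this
      tauto
    rw [hmu_zero x u h1 hnadj, mul_zero]
  have hvany : ∀ u : V, u ∉ ({x, y, c, d} : Finset V) → f u * muMeasure G (1/4) y u = 0 := by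
    intro u hu
    simp only [Finset.mem_insert, Finset.mem_singleton, not_or] at hu
    obtain ⟨h1, h2, h3, h4⟩ := hu
    have hnadj : ¬ G.Adj y u := by
      intro h
      have : u ∈ G.neighborFinset y := by rwa [SimpleGraph.mem_neighborFinset]
      rw [hNy] at this
      simp only [Finset.mem_insert, Finset.mem_singleton] at this
      tauto
    rw [hmu_zero y u h2 hnadj, mul_zero]
  have hxny : x ∉ ({y, a, b} : Finset V) := by simp [hxy.ne, hxa.ne, hxb.ne]
  have hyab : y ∉ ({a, b} : Finset V) := by simp [Ne.symm hay, Ne.symm hby]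
  have hanb : a ∉ ({b} : Finset V) := by simp [hab]
  have hxcd : x ∉ ({y, c, d} : Finset V) := by simp [hxy.ne, Ne.symm hcx, Ne.symm hdx]
  have hycd : y ∉ ({c, d} : Finset V) := by simp [hyc.ne, hyd.ne]
  have hcnd : c ∉ ({d} : Finset V) := by simp [hcd]
  have hA : ∑' u, f u * muMeasure G (1/4) x u =
      (2 : ℝ≥0∞) * (1/4) + ((1 : ℝ≥0∞) * (1/4) + ((3 : ℝ≥0∞) * (1/4) + (3 : ℝ≥0∞) * (1/4))) := by
    rw [tsum_eq_sum hvanx, Finset.sum_insert hxny, Finset.sum_insert hyab,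
      Finset.sum_insert hanb, Finset.sum_singleton, hmu_self x, hmu_adj x y hxy,
      hmu_adj x a hxa, hmu_adj x b hxb, hf_def]
    simp only [hfa, hfb, hfx, hfy]
    norm_num
  have hB : ∑' u, f u * muMeasure G (1/4) y u =
      (2 : ℝ≥0∞) * (1/4) + (1 : ℝ≥0∞) * (1/4) := by
    rw [tsum_eq_sum hvany, Finset.sum_insert hxcd, Finset.sum_insert hycd,
      Finset.sum_insert hcnd, Finset.sum_singleton, hmu_self y, hmu_adj y x hxy.symm,
      hmu_adj y c hyc, hmu_adj y d hyd, hf_def]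
    simp only [hfa, hfb, hfx, hfy, hfc, hfd]
    norm_num
  -- every transport plan costs at least 3/2
  have hW : (3 : ℝ≥0∞) / 2 ≤ W1 G (muMeasure G (1/4) x) (muMeasure G (1/4) y) := by
    rw [W1]
    refine le_iInf fun π => ?_
    have hf : ∀ u v, π.1 u v ≠ 0 → f u ≤ f v + (G.dist u v : ℝ≥0∞) := by
      intro u v hπuv
      have hu : muMeasure G (1/4) x u ≠ 0 := by
        intro h0
        apply hπuv
        have hle : π.1 u v ≤ muMeasure G (1/4) x u := by
          rw [← π.2.2.1 u]; exact ENNReal.le_tsum v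
        exact le_antisymm (h0 ▸ hle) (zero_le)
      have hv : muMeasure G (1/4) y v ≠ 0 := by
        intro h0
        apply hπuv
        have hle : π.1 u v ≤ muMeasure G (1/4) y v := by
          rw [← π.2.2.2 v]; exact ENNReal.le_tsum u
        exact le_antisymm (h0 ▸ hle) (zero_le)
      have hu' : u = x ∨ u = y ∨ u = a ∨ u = b := by
        by_contra hcon
        push_neg at hcon
        refine hu (hmu_zero x u hcon.1 ?_)
        intro h
        have : u ∈ G.neighborFinset x := by rwa [SimpleGraph.mem_neighborFinset]
        rw [hNx] at this
        simp only [Finset.mem_insert, Finset.mem_singleton] at this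
        tauto
      have hv' : v = x ∨ v = y ∨ v = c ∨ v = d := by
        by_contra hcon
        push_neg at hcon
        refine hv (hmu_zero y v hcon.2.1 ?_)
        intro h
        have : v ∈ G.neighborFinset y := by rwa [SimpleGraph.mem_neighborFinset]
        rw [hNy] at this
        simp only [Finset.mem_insert, Finset.mem_singleton] at this
        tauto
      have hdists : True := trivial
      rw [hf_def]
      simp only
      rw [← Nat.cast_add, Nat.cast_le]
      rcases hu' with rfl | rfl | rfl | rfl <;> rcases hv' with rfl | rfl | rfl | rfl <;>
        simp only [hfa, hfb, hfx, hfy, hfc, hfd] <;> omega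
    have hge := plan_cost_ge G π.2 f hf
    rw [hA, hB] at hge
    have h94 : (2 : ℝ≥0∞) * (1/4) + ((1 : ℝ≥0∞) * (1/4) + ((3 : ℝ≥0∞) * (1/4) + (3 : ℝ≥0∞) * (1/4)))
        = 3/2 + ((2 : ℝ≥0∞) * (1/4) + (1 : ℝ≥0∞) * (1/4)) := by
      have h62 : (3:ℝ≥0∞)/2 = 6/4 := by
        rw [show (6:ℝ≥0∞) = 2*3 by norm_num, show (4:ℝ≥0∞) = 2*2 by norm_num,
          ENNReal.mul_div_mul_left _ _ (by norm_num) (by norm_num)]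
      rw [h62]
      simp only [mul_one_div, ENNReal.div_add_div_same, one_mul]
      norm_num
    rw [h94] at hge
    rw [add_comm ((2 : ℝ≥0∞) * (1/4) + (1 : ℝ≥0∞) * (1/4))] at hge
    have hBne : (2 : ℝ≥0∞) * (1/4) + (1 : ℝ≥0∞) * (1/4) ≠ ⊤ := by
      have : (1:ℝ≥0∞)/4 ≠ ⊤ := (ENNReal.div_lt_top ENNReal.one_ne_top (by norm_num)).ne
      exact ENNReal.add_ne_top.mpr ⟨ENNReal.mul_ne_top (by norm_num) this,
        ENNReal.mul_ne_top (by norm_num) this⟩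
    exact (ENNReal.add_le_add_iff_right hBne).mp hge
  rw [hflat x y hxy] at hW
  have : ¬ ((3:ℝ≥0∞)/2 ≤ 1) := by
    rw [ENNReal.div_le_iff (by norm_num) (by norm_num), one_mul]
    norm_num
  exact this hW

end RicciFlatCubic
end

section
/- Every edge xy of the Petersen graph satisfies W_1(μ_x^{1/4}, μ_y^{1/4}) = 1, i.e. κ_{1/4}(x,y) = 0; hence the Petersen graph is Ricci-flat. -/
open scoped ENNReal

namespace RicciFlatCubic

variable {V : Type*}

private lemma four_mul_inv : (4:ℝ≥0∞) * 4⁻¹ = 1 :=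
  ENNReal.mul_inv_cancel (by norm_num) (by norm_num)

private lemma one_sub_quarter : (1:ℝ≥0∞) - 1/4 = 3 * 4⁻¹ := by
  rw [one_div, ENNReal.sub_eq_of_eq_add (by norm_num)]
  rw [← add_one_mul (3:ℝ≥0∞) 4⁻¹]
  norm_num
  exact four_mul_inv.symm

private lemma three_quarter_div : (3 * 4⁻¹ : ℝ≥0∞) / 3 = 4⁻¹ := by
  rw [div_eq_mul_inv, mul_comm (3:ℝ≥0∞) 4⁻¹, mul_assoc,
    ENNReal.mul_inv_cancel (by norm_num) (by norm_num), mul_one]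

private lemma seven_quarter : (7:ℝ≥0∞) * 4⁻¹ = 1 + 3 * 4⁻¹ := by
  calc (7:ℝ≥0∞) * 4⁻¹ = 4 * 4⁻¹ + 3 * 4⁻¹ := by rw [← add_mul]; norm_num
  _ = 1 + 3 * 4⁻¹ := by rw [four_mul_inv]

private lemma three_quarter_ne_top : (3 * 4⁻¹ : ℝ≥0∞) ≠ ⊤ :=
  ENNReal.mul_ne_top (by norm_num) (ENNReal.inv_ne_top.mpr (by norm_num))

/-- values of the measure -/
private lemma muMeasure_self (G : SimpleGraph V) [G.LocallyFinite] (x : V) :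
    muMeasure G (1/4) x x = 4⁻¹ := by
  unfold muMeasure
  rw [if_pos rfl, one_div]

private lemma muMeasure_adj {G : SimpleGraph V} [G.LocallyFinite] {x u : V}
    (hdx : G.degree x = 3) (h : G.Adj x u) :
    muMeasure G (1/4) x u = 4⁻¹ := by
  unfold muMeasure
  rw [if_neg h.ne', if_pos h, hdx, one_sub_quarter]
  have h3 : ((3:ℕ):ℝ≥0∞) = 3 := by norm_num
  rw [h3, three_quarter_div]

private lemma muMeasure_zero {G : SimpleGraph V} [G.LocallyFinite] {x u : V}
    (hx : u ≠ x) (h : ¬ G.Adj x u) :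
    muMeasure G (1/4) x u = 0 := by
  unfold muMeasure
  rw [if_neg hx, if_neg h]

private lemma dist_eq_two_of_mid {G : SimpleGraph V} {u v m : V} (h1 : G.Adj u m)
    (h2 : G.Adj m v) (hna : ¬ G.Adj u v) (hne : u ≠ v) : G.dist u v = 2 := by
  have hle : G.dist u v ≤ 2 := by
    have := G.dist_le (SimpleGraph.Walk.cons h1 h2.toWalk)
    simpa using this
  have h0 : 0 < G.dist u v :=
    SimpleGraph.Reachable.pos_dist_of_ne (h1.reachable.trans h2.reachable) hne
  have h1' : G.dist u v ≠ 1 := fun h => hna (SimpleGraph.dist_eq_one_iff_adj.mp h)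
  omega

private lemma W1_eq_one_of_config (G : SimpleGraph V) [G.LocallyFinite]
    (x y a b c d : V)
    (hxy : G.Adj x y)
    (hdx : G.degree x = 3) (hdy : G.degree y = 3)
    (hAx : ∀ z, G.Adj x z ↔ z = y ∨ z = a ∨ z = b)
    (hAy : ∀ z, G.Adj y z ↔ z = x ∨ z = c ∨ z = d)
    (hxa : x ≠ a) (hxb : x ≠ b) (hya : y ≠ a) (hyb : y ≠ b) (hab : a ≠ b)
    (hxc : x ≠ c) (hxd : x ≠ d) (hyc : y ≠ c) (hyd : y ≠ d) (hcd : c ≠ d)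
    (hday : 2 ≤ G.dist a y) (hdby : 2 ≤ G.dist b y)
    (hdxc : 1 ≤ G.dist x c) (hdxd : 1 ≤ G.dist x d)
    (hdac : G.dist a c = 2) (hdbd : G.dist b d = 2)
    (hdad : 2 ≤ G.dist a d) (hdbc : 2 ≤ G.dist b c) :
    W1 G (muMeasure G (1/4) x) (muMeasure G (1/4) y) = 1 := by
  classical
  have hxy' : x ≠ y := hxy.ne
  have hac : a ≠ c := fun h => by rw [h, SimpleGraph.dist_self] at hdac; omega
  have had : a ≠ d := fun h => by rw [h, SimpleGraph.dist_self] at hdad; omega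
  have hbc : b ≠ c := fun h => by rw [h, SimpleGraph.dist_self] at hdbc; omega
  have hbd : b ≠ d := fun h => by rw [h, SimpleGraph.dist_self] at hdbd; omega
  set μx := muMeasure G (1/4) x with hμx
  set μy := muMeasure G (1/4) y with hμy
  have hadjxa : G.Adj x a := (hAx a).mpr (Or.inr (Or.inl rfl))
  have hadjxb : G.Adj x b := (hAx b).mpr (Or.inr (Or.inr rfl))
  have hadjyc : G.Adj y c := (hAy c).mpr (Or.inr (Or.inl rfl))
  have hadjyd : G.Adj y d := (hAy d).mpr (Or.inr (Or.inr rfl))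
  -- measure values
  have hμxx : μx x = 4⁻¹ := muMeasure_self G x
  have hμxy : μx y = 4⁻¹ := muMeasure_adj hdx hxy
  have hμxa : μx a = 4⁻¹ := muMeasure_adj hdx hadjxa
  have hμxb : μx b = 4⁻¹ := muMeasure_adj hdx hadjxb
  have hμx0 : ∀ u, u ≠ x → u ≠ y → u ≠ a → u ≠ b → μx u = 0 := fun u h1 h2 h3 h4 =>
    muMeasure_zero h1 (fun h => by rw [hAx] at h; tauto)
  have hμyy : μy y = 4⁻¹ := muMeasure_self G y
  have hμyx : μy x = 4⁻¹ := muMeasure_adj hdy hxy.symm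
  have hμyc : μy c = 4⁻¹ := muMeasure_adj hdy hadjyc
  have hμyd : μy d = 4⁻¹ := muMeasure_adj hdy hadjyd
  have hμy0 : ∀ v, v ≠ x → v ≠ y → v ≠ c → v ≠ d → μy v = 0 := fun v h1 h2 h3 h4 =>
    muMeasure_zero h2 (fun h => by rw [hAy] at h; tauto)
  -- the support finsets
  set Sx : Finset V := insert x (insert y (insert a {b})) with hSx
  set Sy : Finset V := insert x (insert y (insert c {d})) with hSy
  have hmemSx : ∀ u, u ∈ Sx ↔ u = x ∨ u = y ∨ u = a ∨ u = b := by
    intro u; simp [hSx]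
  have hmemSy : ∀ v, v ∈ Sy ↔ v = x ∨ v = y ∨ v = c ∨ v = d := by
    intro v; simp [hSy]
  -- the potential function
  set f : V → ℝ≥0∞ := fun v => if v = x then 1 else if v = y ∨ v = c ∨ v = d then 2 else 0
    with hf
  have hfx : f x = 1 := by simp [hf]
  have hfy : f y = 2 := by simp [hf, hxy'.symm]
  have hfc : f c = 2 := by simp [hf, hxc.symm]
  have hfd : f d = 2 := by simp [hf, hxd.symm]
  have hfa : f a = 0 := by simp [hf, hxa.symm, hya.symm, hac, had]
  have hfb : f b = 0 := by simp [hf, hxb.symm, hyb.symm, hbc, hbd]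
  apply le_antisymm
  · -- upper bound: explicit transport plan
    set π₀ : V → V → ℝ≥0∞ := fun u v =>
      if u = x ∧ v = x then 4⁻¹ else if u = y ∧ v = y then 4⁻¹ else
      if u = a ∧ v = c then 4⁻¹ else if u = b ∧ v = d then 4⁻¹ else 0 with hπ₀
    have hplan : IsTransportPlan μx μy π₀ := by
      refine ⟨fun u v => ?_, fun u => ?_, fun v => ?_⟩
      · simp only [hπ₀]
        split_ifs <;> simp [ENNReal.inv_le_one]
      · by_cases h1 : u = x
        · subst h1
          have : ∀ v, π₀ u v = if v = u then 4⁻¹ else 0 := by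
            intro v; simp [hπ₀, hxy', hxy'.symm, hxa, hxa.symm, hxb, hxb.symm, hya, hya.symm, hyb, hyb.symm, hab, hab.symm, hxc, hxc.symm, hxd, hxd.symm, hyc, hyc.symm, hyd, hyd.symm, hcd, hcd.symm, hac, hac.symm, had, had.symm, hbc, hbc.symm, hbd, hbd.symm]
          rw [tsum_congr this, tsum_ite_eq, hμxx]
        · by_cases h2 : u = y
          · subst h2
            have : ∀ v, π₀ u v = if v = u then 4⁻¹ else 0 := by
              intro v; simp [hπ₀, hxy', hxy'.symm, hxa, hxa.symm, hxb, hxb.symm, hya, hya.symm, hyb, hyb.symm, hab, hab.symm, hxc, hxc.symm, hxd, hxd.symm, hyc, hyc.symm, hyd, hyd.symm, hcd, hcd.symm, hac, hac.symm, had, had.symm, hbc, hbc.symm, hbd, hbd.symm]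
            rw [tsum_congr this, tsum_ite_eq, hμxy]
          · by_cases h3 : u = a
            · subst h3
              have : ∀ v, π₀ u v = if v = c then 4⁻¹ else 0 := by
                intro v; simp [hπ₀, hxy', hxy'.symm, hxa, hxa.symm, hxb, hxb.symm, hya, hya.symm, hyb, hyb.symm, hab, hab.symm, hxc, hxc.symm, hxd, hxd.symm, hyc, hyc.symm, hyd, hyd.symm, hcd, hcd.symm, hac, hac.symm, had, had.symm, hbc, hbc.symm, hbd, hbd.symm]
              rw [tsum_congr this, tsum_ite_eq, hμxa]
            · by_cases h4 : u = b
              · subst h4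
                have : ∀ v, π₀ u v = if v = d then 4⁻¹ else 0 := by
                  intro v; simp [hπ₀, hxy', hxy'.symm, hxa, hxa.symm, hxb, hxb.symm, hya, hya.symm, hyb, hyb.symm, hab, hab.symm, hxc, hxc.symm, hxd, hxd.symm, hyc, hyc.symm, hyd, hyd.symm, hcd, hcd.symm, hac, hac.symm, had, had.symm, hbc, hbc.symm, hbd, hbd.symm]
                rw [tsum_congr this, tsum_ite_eq, hμxb]
              · have : ∀ v, π₀ u v = 0 := by
                  intro v; simp [hπ₀, h1, h2, h3, h4]
                rw [tsum_congr this, tsum_zero, hμx0 u h1 h2 h3 h4]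
      · by_cases h1 : v = x
        · subst h1
          have : ∀ u, π₀ u v = if u = v then 4⁻¹ else 0 := by
            intro u; simp [hπ₀, hxy', hxy'.symm, hxa, hxa.symm, hxb, hxb.symm, hya, hya.symm, hyb, hyb.symm, hab, hab.symm, hxc, hxc.symm, hxd, hxd.symm, hyc, hyc.symm, hyd, hyd.symm, hcd, hcd.symm, hac, hac.symm, had, had.symm, hbc, hbc.symm, hbd, hbd.symm]
          rw [tsum_congr this, tsum_ite_eq, hμyx]
        · by_cases h2 : v = y
          · subst h2
            have : ∀ u, π₀ u v = if u = v then 4⁻¹ else 0 := by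
              intro u; simp [hπ₀, hxy', hxy'.symm, hxa, hxa.symm, hxb, hxb.symm, hya, hya.symm, hyb, hyb.symm, hab, hab.symm, hxc, hxc.symm, hxd, hxd.symm, hyc, hyc.symm, hyd, hyd.symm, hcd, hcd.symm, hac, hac.symm, had, had.symm, hbc, hbc.symm, hbd, hbd.symm]
            rw [tsum_congr this, tsum_ite_eq, hμyy]
          · by_cases h3 : v = c
            · subst h3
              have : ∀ u, π₀ u v = if u = a then 4⁻¹ else 0 := by
                intro u; simp [hπ₀, hxy', hxy'.symm, hxa, hxa.symm, hxb, hxb.symm, hya, hya.symm, hyb, hyb.symm, hab, hab.symm, hxc, hxc.symm, hxd, hxd.symm, hyc, hyc.symm, hyd, hyd.symm, hcd, hcd.symm, hac, hac.symm, had, had.symm, hbc, hbc.symm, hbd, hbd.symm]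
              rw [tsum_congr this, tsum_ite_eq, hμyc]
            · by_cases h4 : v = d
              · subst h4
                have : ∀ u, π₀ u v = if u = b then 4⁻¹ else 0 := by
                  intro u; simp [hπ₀, hxy', hxy'.symm, hxa, hxa.symm, hxb, hxb.symm, hya, hya.symm, hyb, hyb.symm, hab, hab.symm, hxc, hxc.symm, hxd, hxd.symm, hyc, hyc.symm, hyd, hyd.symm, hcd, hcd.symm, hac, hac.symm, had, had.symm, hbc, hbc.symm, hbd, hbd.symm]
                rw [tsum_congr this, tsum_ite_eq, hμyd]
              · have : ∀ u, π₀ u v = 0 := by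
                  intro u; simp [hπ₀, h1, h2, h3, h4]
                rw [tsum_congr this, tsum_zero, hμy0 v h1 h2 h3 h4]
    have hcost : ∑' q : V × V, (G.dist q.1 q.2 : ℝ≥0∞) * π₀ q.1 q.2 = 1 := by
      set s : Finset (V × V) := insert (x, x) (insert (y, y) (insert (a, c) {(b, d)}))
        with hs
      rw [tsum_eq_sum (s := s) ?h0]
      case h0 =>
        intro q hq
        simp only [hs, Finset.mem_insert, Finset.mem_singleton] at hq
        push_neg at hq
        obtain ⟨q1, q2, q3, q4⟩ := hq
        have : π₀ q.1 q.2 = 0 := by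
          simp only [hπ₀]
          split_ifs with c1 c2 c3 c4
          · exact absurd (Prod.ext c1.1 c1.2) q1
          · exact absurd (Prod.ext c2.1 c2.2) q2
          · exact absurd (Prod.ext c3.1 c3.2) q3
          · exact absurd (Prod.ext c4.1 c4.2) q4
          · rfl
        rw [this, mul_zero]
      have hne1 : (x, x) ∉ (insert (y, y) (insert (a, c) {(b, d)}) : Finset (V × V)) := by
        simp [Prod.ext_iff, hxy', hxa, hxb]
      have hne2 : (y, y) ∉ (insert (a, c) {(b, d)} : Finset (V × V)) := by
        simp [Prod.ext_iff, hya, hyb]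
      have hne3 : (a, c) ∉ ({(b, d)} : Finset (V × V)) := by
        simp [Prod.ext_iff, hab]
      rw [hs, Finset.sum_insert hne1, Finset.sum_insert hne2, Finset.sum_insert hne3,
        Finset.sum_singleton]
      have e1 : π₀ x x = 4⁻¹ := by simp [hπ₀]
      have e2 : π₀ y y = 4⁻¹ := by simp [hπ₀, hxy', hxy'.symm, hxa, hxa.symm, hxb, hxb.symm, hya, hya.symm, hyb, hyb.symm, hab, hab.symm, hxc, hxc.symm, hxd, hxd.symm, hyc, hyc.symm, hyd, hyd.symm, hcd, hcd.symm, hac, hac.symm, had, had.symm, hbc, hbc.symm, hbd, hbd.symm]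
      have e3 : π₀ a c = 4⁻¹ := by simp [hπ₀, hxy', hxy'.symm, hxa, hxa.symm, hxb, hxb.symm, hya, hya.symm, hyb, hyb.symm, hab, hab.symm, hxc, hxc.symm, hxd, hxd.symm, hyc, hyc.symm, hyd, hyd.symm, hcd, hcd.symm, hac, hac.symm, had, had.symm, hbc, hbc.symm, hbd, hbd.symm]
      have e4 : π₀ b d = 4⁻¹ := by simp [hπ₀, hxy', hxy'.symm, hxa, hxa.symm, hxb, hxb.symm, hya, hya.symm, hyb, hyb.symm, hab, hab.symm, hxc, hxc.symm, hxd, hxd.symm, hyc, hyc.symm, hyd, hyd.symm, hcd, hcd.symm, hac, hac.symm, had, had.symm, hbc, hbc.symm, hbd, hbd.symm]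
      rw [e1, e2, e3, e4, SimpleGraph.dist_self, SimpleGraph.dist_self, hdac, hdbd]
      have h2 : ((2:ℕ):ℝ≥0∞) = 2 := by norm_num
      rw [h2]
      rw [show ((0:ℕ):ℝ≥0∞) = 0 by norm_num]
      rw [zero_mul, zero_add, zero_add, ← add_mul]
      rw [show (2:ℝ≥0∞) + 2 = 4 by norm_num]
      exact four_mul_inv
    calc W1 G μx μy ≤ ∑' q : V × V, (G.dist q.1 q.2 : ℝ≥0∞) * π₀ q.1 q.2 :=
          iInf_le _ (⟨π₀, hplan⟩ : {π : V → V → ℝ≥0∞ // IsTransportPlan μx μy π})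
      _ = 1 := hcost
  · -- lower bound
    refine le_iInf fun π => ?_
    obtain ⟨πle, hrow, hcol⟩ := π.2
    set p : V → V → ℝ≥0∞ := π.1 with hp
    have hpx : ∀ u v, p u v ≤ μx u := fun u v => (hrow u) ▸ ENNReal.le_tsum v
    have hpy : ∀ u v, p u v ≤ μy v := fun u v => (hcol v) ▸ ENNReal.le_tsum u
    have hrow' : ∀ u, ∑ v ∈ Sy, p u v = μx u := by
      intro u
      rw [← hrow u, tsum_eq_sum]
      intro v hv
      rw [hmemSy] at hv
      push_neg at hv
      exact le_antisymm (le_trans (hpy u v) (le_of_eq (hμy0 v hv.1 hv.2.1 hv.2.2.1 hv.2.2.2)))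
        zero_le
    have hcol' : ∀ v, ∑ u ∈ Sx, p u v = μy v := by
      intro v
      rw [← hcol v, tsum_eq_sum]
      intro u hu
      rw [hmemSx] at hu
      push_neg at hu
      exact le_antisymm (le_trans (hpx u v) (le_of_eq (hμx0 u hu.1 hu.2.1 hu.2.2.1 hu.2.2.2)))
        zero_le
    have key : ∀ u ∈ Sx, ∀ v ∈ Sy, f v ≤ (G.dist u v : ℝ≥0∞) + f u := by
      intro u hu v hv
      rw [hmemSx] at hu; rw [hmemSy] at hv
      have cast2 : ∀ {n : ℕ}, 2 ≤ n → (2:ℝ≥0∞) ≤ (n:ℝ≥0∞) := by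
        intro n h; exact_mod_cast h
      have cast1 : ∀ {n : ℕ}, 1 ≤ n → (1:ℝ≥0∞) ≤ (n:ℝ≥0∞) := by
        intro n h; exact_mod_cast h
      rcases hu with rfl | rfl | rfl | rfl <;> rcases hv with rfl | rfl | rfl | rfl
      · rw [hfx]; exact le_add_self
      · rw [hfy, hfx, SimpleGraph.dist_eq_one_iff_adj.mpr hxy]; norm_num
      · rw [hfc, hfx]
        calc (2:ℝ≥0∞) = 1 + 1 := by norm_num
        _ ≤ _ + 1 := add_le_add_left (cast1 hdxc) 1
      · rw [hfd, hfx]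
        calc (2:ℝ≥0∞) = 1 + 1 := by norm_num
        _ ≤ _ + 1 := add_le_add_left (cast1 hdxd) 1
      · rw [hfx, hfy]; exact le_add_left (by norm_num)
      · rw [hfy]; exact le_add_self
      · rw [hfc, hfy]; exact le_add_self
      · rw [hfd, hfy]; exact le_add_self
      · rw [hfx, hfa, add_zero]
        exact cast1 (by rw [SimpleGraph.dist_eq_one_iff_adj.mpr hadjxa.symm])
      · rw [hfy, hfa, add_zero]; exact cast2 hday
      · rw [hfc, hfa, add_zero]; exact cast2 (by omega)
      · rw [hfd, hfa, add_zero]; exact cast2 hdad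
      · rw [hfx, hfb, add_zero]
        exact cast1 (by rw [SimpleGraph.dist_eq_one_iff_adj.mpr hadjxb.symm])
      · rw [hfy, hfb, add_zero]; exact cast2 hdby
      · rw [hfc, hfb, add_zero]; exact cast2 hdbc
      · rw [hfd, hfb, add_zero]; exact cast2 (by omega)
    have hge : ∑ q ∈ Sx ×ˢ Sy, f q.2 * p q.1 q.2 ≤
        ∑ q ∈ Sx ×ˢ Sy, ((G.dist q.1 q.2 : ℝ≥0∞) + f q.1) * p q.1 q.2 := by
      refine Finset.sum_le_sum fun q hq => ?_
      rw [Finset.mem_product] at hq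
      exact mul_le_mul_left (key q.1 hq.1 q.2 hq.2) _
    have hnotmem_x : x ∉ (insert y (insert a ({b} : Finset V))) := by
      simp [hxy', hxa, hxb]
    have hnotmem_y : y ∉ (insert a ({b} : Finset V)) := by simp [hya, hyb]
    have hnotmem_a : a ∉ ({b} : Finset V) := by simp [hab]
    have hnotmem_x' : x ∉ (insert y (insert c ({d} : Finset V))) := by
      simp [hxy', hxc, hxd]
    have hnotmem_y' : y ∉ (insert c ({d} : Finset V)) := by simp [hyc, hyd]
    have hnotmem_c : c ∉ ({d} : Finset V) := by simp [hcd]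
    have hA : ∑ q ∈ Sx ×ˢ Sy, f q.1 * p q.1 q.2 = 3 * 4⁻¹ := by
      rw [Finset.sum_product]
      have : ∀ u ∈ Sx, ∑ v ∈ Sy, f u * p u v = f u * μx u := by
        intro u _
        rw [← Finset.mul_sum, hrow' u]
      rw [Finset.sum_congr rfl this]
      rw [hSx, Finset.sum_insert hnotmem_x, Finset.sum_insert hnotmem_y,
        Finset.sum_insert hnotmem_a, Finset.sum_singleton]
      rw [hfx, hfy, hfa, hfb, hμxx, hμxy, hμxa, hμxb]
      ring
    have hB : ∑ q ∈ Sx ×ˢ Sy, f q.2 * p q.1 q.2 = 7 * 4⁻¹ := by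
      rw [Finset.sum_product]
      rw [Finset.sum_comm]
      have : ∀ v ∈ Sy, ∑ u ∈ Sx, f v * p u v = f v * μy v := by
        intro v _
        rw [← Finset.mul_sum, hcol' v]
      rw [Finset.sum_congr rfl this]
      rw [hSy, Finset.sum_insert hnotmem_x', Finset.sum_insert hnotmem_y',
        Finset.sum_insert hnotmem_c, Finset.sum_singleton]
      rw [hfx, hfy, hfc, hfd, hμyx, hμyy, hμyc, hμyd]
      ring
    have hsplit : ∑ q ∈ Sx ×ˢ Sy, ((G.dist q.1 q.2 : ℝ≥0∞) + f q.1) * p q.1 q.2 =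
        (∑ q ∈ Sx ×ˢ Sy, (G.dist q.1 q.2 : ℝ≥0∞) * p q.1 q.2) +
          ∑ q ∈ Sx ×ˢ Sy, f q.1 * p q.1 q.2 := by
      rw [← Finset.sum_add_distrib]
      exact Finset.sum_congr rfl fun q _ => add_mul _ _ _
    have hfin : 1 ≤ ∑ q ∈ Sx ×ˢ Sy, (G.dist q.1 q.2 : ℝ≥0∞) * p q.1 q.2 := by
      have h7 : (7:ℝ≥0∞) * 4⁻¹ ≤
          (∑ q ∈ Sx ×ˢ Sy, (G.dist q.1 q.2 : ℝ≥0∞) * p q.1 q.2) + 3 * 4⁻¹ := by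
        rw [← hA, ← hsplit, ← hB]
        exact hge
      rw [seven_quarter] at h7
      exact (ENNReal.add_le_add_iff_right three_quarter_ne_top).mp h7
    calc (1:ℝ≥0∞) ≤ ∑ q ∈ Sx ×ˢ Sy, (G.dist q.1 q.2 : ℝ≥0∞) * p q.1 q.2 := hfin
      _ ≤ ∑' q : V × V, (G.dist q.1 q.2 : ℝ≥0∞) * p q.1 q.2 := ENNReal.sum_le_tsum _

private lemma pair_ne_pair₁ {α : Type*} [DecidableEq α] {a b c d : α} (h1 : a ≠ c)
    (h2 : a ≠ d) : ({a, b} : Finset α) ≠ {c, d} := by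
  intro he
  have : a ∈ ({c, d} : Finset α) := he ▸ Finset.mem_insert_self a {b}
  simp only [Finset.mem_insert, Finset.mem_singleton] at this
  tauto

private lemma pair_ne_pair₂ {α : Type*} [DecidableEq α] {a b c d : α} (h1 : b ≠ c)
    (h2 : b ≠ d) : ({a, b} : Finset α) ≠ {c, d} := by
  intro he
  have : b ∈ ({c, d} : Finset α) := he ▸ (by simp : b ∈ ({a, b} : Finset α))
  simp only [Finset.mem_insert, Finset.mem_singleton] at this
  tauto

private lemma disj_pair {a b c d : Fin 5} (h1 : a ≠ c) (h2 : a ≠ d) (h3 : b ≠ c)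
    (h4 : b ≠ d) : Disjoint ({a, b} : Finset (Fin 5)) {c, d} := by
  rw [Finset.disjoint_left]
  intro e he hce
  simp only [Finset.mem_insert, Finset.mem_singleton] at he hce
  rcases he with rfl | rfl <;> rcases hce with rfl | rfl <;> tauto

private lemma not_disj_pair {a b c d : Fin 5} (h : a = c) :
    ¬ Disjoint ({a, b} : Finset (Fin 5)) {c, d} := by
  subst h
  intro h
  exact (Finset.disjoint_left.mp h (Finset.mem_insert_self a {b}))
    (Finset.mem_insert_self a {d})

private lemma pair_subset_three {α : Type*} [DecidableEq α] {r s t : α} {z : Finset α}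
    (hz : z.card = 2) (h : z ⊆ {r, s, t}) :
    z = {r, s} ∨ z = {r, t} ∨ z = {s, t} := by
  obtain ⟨u, v, huv, rfl⟩ := Finset.card_eq_two.mp hz
  have hu := h (Finset.mem_insert_self u {v})
  have hv : v ∈ ({r, s, t} : Finset α) := h (by simp)
  simp only [Finset.mem_insert, Finset.mem_singleton] at hu hv
  rcases hu with rfl | rfl | rfl <;> rcases hv with rfl | rfl | rfl <;>
    first
      | exact absurd rfl huv
      | exact Or.inl rfl
      | exact Or.inl (Finset.pair_comm _ _)
      | exact Or.inr (Or.inl rfl)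
      | exact Or.inr (Or.inl (Finset.pair_comm _ _))
      | exact Or.inr (Or.inr rfl)
      | exact Or.inr (Or.inr (Finset.pair_comm _ _))

theorem petersen_ricciFlat (x y : {s : Finset (Fin 5) // s.card = 2}) (hxy : petersen.Adj x y) :
    W1 petersen (muMeasure petersen (1/4) x) (muMeasure petersen (1/4) y) = 1 := by
  classical
  obtain ⟨xs, hxs⟩ := x
  obtain ⟨ys, hys⟩ := y
  obtain ⟨p, q, hpq, rfl⟩ := Finset.card_eq_two.mp hxs
  obtain ⟨r, s, hrs, rfl⟩ := Finset.card_eq_two.mp hys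
  have hdisj : Disjoint ({p, q} : Finset (Fin 5)) {r, s} := hxy
  have hd := Finset.disjoint_left.mp hdisj
  have hpr : p ≠ r := fun h => hd (show (p:Fin 5) ∈ ({p, q} : Finset (Fin 5)) by simp) (show (p:Fin 5) ∈ ({r, s} : Finset (Fin 5)) by simp [h])
  have hps : p ≠ s := fun h => hd (show (p:Fin 5) ∈ ({p, q} : Finset (Fin 5)) by simp) (show (p:Fin 5) ∈ ({r, s} : Finset (Fin 5)) by simp [h])
  have hqr : q ≠ r := fun h => hd (show (q:Fin 5) ∈ ({p, q} : Finset (Fin 5)) by simp) (show (q:Fin 5) ∈ ({r, s} : Finset (Fin 5)) by simp [h])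
  have hqs : q ≠ s := fun h => hd (show (q:Fin 5) ∈ ({p, q} : Finset (Fin 5)) by simp) (show (q:Fin 5) ∈ ({r, s} : Finset (Fin 5)) by simp [h])
  -- the fifth element t
  have hcard4 : ({p, q, r, s} : Finset (Fin 5)).card = 4 := by
    rw [Finset.card_insert_of_notMem (by simp [hpq, hpr, hps]),
      Finset.card_insert_of_notMem (by simp [hqr, hqs]),
      Finset.card_pair hrs]
  have hcompl : (Finset.univ \ ({p, q, r, s} : Finset (Fin 5))).card = 1 := by
    rw [Finset.card_sdiff_of_subset (Finset.subset_univ _), hcard4]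
    simp
  obtain ⟨t, ht⟩ := Finset.card_eq_one.mp hcompl
  have htmem : t ∈ Finset.univ \ ({p, q, r, s} : Finset (Fin 5)) := by
    rw [ht]; simp
  have htp : t ≠ p := by simp only [Finset.mem_sdiff, Finset.mem_insert,
    Finset.mem_singleton] at htmem; tauto
  have htq : t ≠ q := by simp only [Finset.mem_sdiff, Finset.mem_insert,
    Finset.mem_singleton] at htmem; tauto
  have htr : t ≠ r := by simp only [Finset.mem_sdiff, Finset.mem_insert,
    Finset.mem_singleton] at htmem; tauto
  have hts : t ≠ s := by simp only [Finset.mem_sdiff, Finset.mem_insert,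
    Finset.mem_singleton] at htmem; tauto
  have hall : ∀ w : Fin 5, w = p ∨ w = q ∨ w = r ∨ w = s ∨ w = t := by
    intro w
    by_cases h : w ∈ ({p, q, r, s} : Finset (Fin 5))
    · simp only [Finset.mem_insert, Finset.mem_singleton] at h; tauto
    · have : w ∈ Finset.univ \ ({p, q, r, s} : Finset (Fin 5)) := by simp [h]
      rw [ht] at this
      simp only [Finset.mem_singleton] at this
      tauto
  -- the vertices
  set X : {s : Finset (Fin 5) // s.card = 2} := ⟨{p, q}, hxs⟩ with hX
  set Y : {s : Finset (Fin 5) // s.card = 2} := ⟨{r, s}, hys⟩ with hY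
  set A : {s : Finset (Fin 5) // s.card = 2} := ⟨{r, t}, Finset.card_pair htr.symm⟩ with hA
  set B : {s : Finset (Fin 5) // s.card = 2} := ⟨{s, t}, Finset.card_pair hts.symm⟩ with hB
  set C : {s : Finset (Fin 5) // s.card = 2} := ⟨{p, t}, Finset.card_pair htp.symm⟩ with hC
  set D : {s : Finset (Fin 5) // s.card = 2} := ⟨{q, t}, Finset.card_pair htq.symm⟩ with hD
  have hsub : ∀ {s1 s2 : Finset (Fin 5)} {c1 : s1.card = 2} {c2 : s2.card = 2},
      s1 ≠ s2 → (⟨s1, c1⟩ : {s : Finset (Fin 5) // s.card = 2}) ≠ ⟨s2, c2⟩ :=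
    fun h he => h (congrArg Subtype.val he)
  -- ne facts between vertices
  have hXY : X ≠ Y := hsub (pair_ne_pair₁ hpr hps)
  have hXA : X ≠ A := hsub (pair_ne_pair₁ hpr htp.symm)
  have hXB : X ≠ B := hsub (pair_ne_pair₁ hps htp.symm)
  have hYA : Y ≠ A := hsub (pair_ne_pair₂ hrs.symm hts.symm)
  have hYB : Y ≠ B := hsub (pair_ne_pair₁ hrs htr.symm)
  have hAB : A ≠ B := hsub (pair_ne_pair₁ hrs htr.symm)
  have hXC : X ≠ C := hsub (pair_ne_pair₂ hpq.symm htq.symm)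
  have hXD : X ≠ D := hsub (pair_ne_pair₁ hpq htp.symm)
  have hYC : Y ≠ C := hsub (pair_ne_pair₁ hpr.symm htr.symm)
  have hYD : Y ≠ D := hsub (pair_ne_pair₁ hqr.symm htr.symm)
  have hCD : C ≠ D := hsub (pair_ne_pair₁ hpq htp.symm)
  -- adjacency characterizations
  have hAx : ∀ z, petersen.Adj X z ↔ z = Y ∨ z = A ∨ z = B := by
    intro z
    constructor
    · intro hadj
      have hdz := Finset.disjoint_left.mp (hadj : Disjoint ({p, q} : Finset (Fin 5)) z.1)
      have hzsub : z.1 ⊆ ({r, s, t} : Finset (Fin 5)) := by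
        intro w hw
        rcases hall w with rfl | rfl | rfl | rfl | rfl
        · exact (hdz (by simp [hX, hY]) hw).elim
        · exact (hdz (by simp [hX, hY]) hw).elim
        · simp
        · simp
        · simp
      rcases pair_subset_three z.2 hzsub with h | h | h
      · exact Or.inl (Subtype.ext h)
      · exact Or.inr (Or.inl (Subtype.ext h))
      · exact Or.inr (Or.inr (Subtype.ext h))
    · rintro (rfl | rfl | rfl)
      · exact hdisj
      · exact disj_pair hpr htp.symm hqr htq.symm
      · exact disj_pair hps htp.symm hqs htq.symm
  have hAy : ∀ z, petersen.Adj Y z ↔ z = X ∨ z = C ∨ z = D := by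
    intro z
    constructor
    · intro hadj
      have hdz := Finset.disjoint_left.mp (hadj : Disjoint ({r, s} : Finset (Fin 5)) z.1)
      have hzsub : z.1 ⊆ ({p, q, t} : Finset (Fin 5)) := by
        intro w hw
        rcases hall w with rfl | rfl | rfl | rfl | rfl
        · simp
        · simp
        · exact (hdz (by simp [hX, hY]) hw).elim
        · exact (hdz (by simp [hX, hY]) hw).elim
        · simp
      rcases pair_subset_three z.2 hzsub with h | h | h
      · exact Or.inl (Subtype.ext h)
      · exact Or.inr (Or.inl (Subtype.ext h))
      · exact Or.inr (Or.inr (Subtype.ext h))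
    · rintro (rfl | rfl | rfl)
      · exact hdisj.symm
      · exact disj_pair hpr.symm htr.symm hps.symm hts.symm
      · exact disj_pair hqr.symm htr.symm hqs.symm hts.symm
  -- degrees
  have hNx : petersen.neighborFinset X = {Y, A, B} := by
    ext z
    rw [SimpleGraph.mem_neighborFinset, hAx]
    simp
  have hNy : petersen.neighborFinset Y = {X, C, D} := by
    ext z
    rw [SimpleGraph.mem_neighborFinset, hAy]
    simp
  have hdx : petersen.degree X = 3 := by
    rw [← SimpleGraph.card_neighborFinset_eq_degree, hNx,
      Finset.card_insert_of_notMem (by simp [hYA, hYB]),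
      Finset.card_insert_of_notMem (by simp [hAB]), Finset.card_singleton]
  have hdy : petersen.degree Y = 3 := by
    rw [← SimpleGraph.card_neighborFinset_eq_degree, hNy,
      Finset.card_insert_of_notMem (by simp [hXC, hXD]),
      Finset.card_insert_of_notMem (by simp [hCD]), Finset.card_singleton]
  -- distance facts
  have hadjXY : petersen.Adj X Y := hdisj
  have hadjXA : petersen.Adj X A := (hAx A).mpr (Or.inr (Or.inl rfl))
  have hadjXB : petersen.Adj X B := (hAx B).mpr (Or.inr (Or.inr rfl))
  have hadjYC : petersen.Adj Y C := (hAy C).mpr (Or.inr (Or.inl rfl))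
  have hadjYD : petersen.Adj Y D := (hAy D).mpr (Or.inr (Or.inr rfl))
  have hday : petersen.dist A Y = 2 :=
    dist_eq_two_of_mid hadjXA.symm hadjXY
      (not_disj_pair rfl : ¬ Disjoint ({r, t} : Finset (Fin 5)) {r, s}) (hYA.symm)
  have hdby : petersen.dist B Y = 2 :=
    dist_eq_two_of_mid hadjXB.symm hadjXY
      (fun h => (Finset.disjoint_left.mp h (by simp : s ∈ ({s, t} : Finset (Fin 5))))
        (by simp [hY])) (hYB.symm)
  have hdxc : petersen.dist X C = 2 :=
    dist_eq_two_of_mid hadjXY hadjYC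
      (fun h => (Finset.disjoint_left.mp h (by simp : p ∈ ({p, q} : Finset (Fin 5))))
        (by simp [hC])) hXC
  have hdxd : petersen.dist X D = 2 :=
    dist_eq_two_of_mid hadjXY hadjYD
      (fun h => (Finset.disjoint_left.mp (h : Disjoint ({p,q}:Finset (Fin 5)) {q,t})
        (by simp : q ∈ ({p, q} : Finset (Fin 5)))) (by simp [hD])) hXD
  have hdac : petersen.dist A C = 2 :=
    dist_eq_two_of_mid
      (show petersen.Adj A ⟨{q, s}, Finset.card_pair hqs⟩ from
        disj_pair hqr.symm hrs htq hts)
      (show petersen.Adj ⟨{q, s}, Finset.card_pair hqs⟩ C from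
        disj_pair hpq.symm htq.symm hps.symm hts.symm)
      (fun h => (Finset.disjoint_left.mp (h : Disjoint ({r,t}:Finset (Fin 5)) {p,t})
        (by simp : t ∈ ({r, t} : Finset (Fin 5)))) (by simp [hC, hD]))
      (hsub (pair_ne_pair₁ hpr.symm htr.symm))
  have hdbd : petersen.dist B D = 2 :=
    dist_eq_two_of_mid
      (show petersen.Adj B ⟨{p, r}, Finset.card_pair hpr⟩ from
        disj_pair hps.symm hrs.symm htp htr)
      (show petersen.Adj ⟨{p, r}, Finset.card_pair hpr⟩ D from
        disj_pair hpq htp.symm hqr.symm htr.symm)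
      (fun h => (Finset.disjoint_left.mp (h : Disjoint ({s,t}:Finset (Fin 5)) {q,t})
        (by simp : t ∈ ({s, t} : Finset (Fin 5)))) (by simp [hC, hD]))
      (hsub (pair_ne_pair₁ hqs.symm hts.symm))
  have hdad : petersen.dist A D = 2 :=
    dist_eq_two_of_mid
      (show petersen.Adj A ⟨{p, s}, Finset.card_pair hps⟩ from
        disj_pair hpr.symm hrs htp hts)
      (show petersen.Adj ⟨{p, s}, Finset.card_pair hps⟩ D from
        disj_pair hpq htp.symm hqs.symm hts.symm)
      (fun h => (Finset.disjoint_left.mp (h : Disjoint ({r,t}:Finset (Fin 5)) {q,t})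
        (by simp : t ∈ ({r, t} : Finset (Fin 5)))) (by simp [hC, hD]))
      (hsub (pair_ne_pair₁ hqr.symm htr.symm))
  have hdbc : petersen.dist B C = 2 :=
    dist_eq_two_of_mid
      (show petersen.Adj B ⟨{q, r}, Finset.card_pair hqr⟩ from
        disj_pair hqs.symm hrs.symm htq htr)
      (show petersen.Adj ⟨{q, r}, Finset.card_pair hqr⟩ C from
        disj_pair hpq.symm htq.symm hpr.symm htr.symm)
      (fun h => (Finset.disjoint_left.mp (h : Disjoint ({s,t}:Finset (Fin 5)) {p,t})
        (by simp : t ∈ ({s, t} : Finset (Fin 5)))) (by simp [hC, hD]))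
      (hsub (pair_ne_pair₁ hps.symm hts.symm))
  exact W1_eq_one_of_config petersen X Y A B C D hadjXY hdx hdy hAx hAy
    hXA hXB hYA hYB hAB hXC hXD hYC hYD hCD
    hday.ge hdby.ge (by omega) (by omega) hdac hdbd hdad.ge hdbc.ge


end RicciFlatCubic
end

section
/- Every edge xy of the dodecahedral graph satisfies W_1(μ_x^{1/4}, μ_y^{1/4}) = 1, i.e. κ_{1/4}(x,y) = 0; hence the dodecahedral graph is Ricci-flat. -/
open scoped ENNReal

namespace RicciFlatCubic

variable {V : Type*}

abbrev VD := Fin 4 × ZMod 5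
def dRel (p q : VD) : Prop :=
  (p.1 = 0 ∧ q.1 = 0 ∧ q.2 = p.2 + 1) ∨
    (p.1 = 0 ∧ q.1 = 1 ∧ q.2 = p.2) ∨
    (p.1 = 1 ∧ q.1 = 2 ∧ q.2 = p.2) ∨
    (p.1 = 2 ∧ q.1 = 1 ∧ q.2 = p.2 + 1) ∨
    (p.1 = 2 ∧ q.1 = 3 ∧ q.2 = p.2) ∨
    (p.1 = 3 ∧ q.1 = 3 ∧ q.2 = p.2 + 1)
instance : DecidableRel dRel := fun p q => by unfold dRel; infer_instance
lemma adj_iff (u v : VD) : dodecahedral.Adj u v ↔ (u ≠ v ∧ (dRel u v ∨ dRel v u)) := by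
  rw [dodecahedral, SimpleGraph.fromRel_adj]; rfl
instance decAdj : DecidableRel dodecahedral.Adj := fun u v =>
  decidable_of_iff _ (adj_iff u v).symm

def rotE (k : ZMod 5) : VD ≃ VD := (Equiv.refl (Fin 4)).prodCongr (Equiv.addRight k)

lemma he_rot : ∀ (k : ZMod 5) (u v : VD),
    dodecahedral.Adj (rotE k u) (rotE k v) ↔ dodecahedral.Adj u v := by decide

def rF : VD → VD := fun p =>
  if p = (0,0) then (0,0) else
  if p = (0,1) then (0,4) else
  if p = (0,2) then (1,4) else
  if p = (0,3) then (2,4) else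
  if p = (0,4) then (1,0) else
  if p = (1,0) then (0,1) else
  if p = (1,1) then (0,3) else
  if p = (1,2) then (2,3) else
  if p = (1,3) then (3,4) else
  if p = (1,4) then (2,0) else
  if p = (2,0) then (0,2) else
  if p = (2,1) then (1,3) else
  if p = (2,2) then (3,3) else
  if p = (2,3) then (3,0) else
  if p = (2,4) then (1,1) else
  if p = (3,0) then (1,2) else
  if p = (3,1) then (2,2) else
  if p = (3,2) then (3,2) else
  if p = (3,3) then (3,1) else
  (2,1)

def rE : VD ≃ VD :=
  ⟨rF, fun p => rF (rF p), by decide, by decide⟩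

def sigE : VD ≃ VD :=
  ⟨fun p => if p.1 = 0 then ((3:Fin 4), p.2) else if p.1 = 1 then (2, p.2)
      else if p.1 = 2 then (1, p.2 + 1) else (0, p.2 + 1),
   fun p => if p.1 = 3 then ((0:Fin 4), p.2) else if p.1 = 2 then (1, p.2)
      else if p.1 = 1 then (2, p.2 - 1) else (3, p.2 - 1),
   by decide, by decide⟩

lemma he_r : ∀ u v : VD, dodecahedral.Adj (rE u) (rE v) ↔ dodecahedral.Adj u v := by decide
lemma he_sig : ∀ u v : VD, dodecahedral.Adj (sigE u) (sigE v) ↔ dodecahedral.Adj u v := by decide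

def fL : VD → ℕ := fun p =>
  (([[1,0,0,1,2],[2,0,0,0,1],[1,0,0,0,1],[0,0,0,0,0]].getD p.1.val []).getD p.2.val 0)

lemma fL_lip : ∀ u v : VD, dodecahedral.Adj u v → fL u ≤ fL v + 1 := by decide
lemma reach_base : ∀ v : VD, dodecahedral.Reachable ((0:Fin 4),(0:ZMod 5)) v := by
  have h00 : dodecahedral.Reachable ((0:Fin 4),(0:ZMod 5)) (0,0) := .refl _
  have h01 : dodecahedral.Reachable ((0:Fin 4),(0:ZMod 5)) (0,1) := h00.trans (SimpleGraph.Adj.reachable (by decide))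
  have h04 : dodecahedral.Reachable ((0:Fin 4),(0:ZMod 5)) (0,4) := h00.trans (SimpleGraph.Adj.reachable (by decide))
  have h10 : dodecahedral.Reachable ((0:Fin 4),(0:ZMod 5)) (1,0) := h00.trans (SimpleGraph.Adj.reachable (by decide))
  have h02 : dodecahedral.Reachable ((0:Fin 4),(0:ZMod 5)) (0,2) := h01.trans (SimpleGraph.Adj.reachable (by decide))
  have h11 : dodecahedral.Reachable ((0:Fin 4),(0:ZMod 5)) (1,1) := h01.trans (SimpleGraph.Adj.reachable (by decide))
  have h03 : dodecahedral.Reachable ((0:Fin 4),(0:ZMod 5)) (0,3) := h04.trans (SimpleGraph.Adj.reachable (by decide))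
  have h14 : dodecahedral.Reachable ((0:Fin 4),(0:ZMod 5)) (1,4) := h04.trans (SimpleGraph.Adj.reachable (by decide))
  have h20 : dodecahedral.Reachable ((0:Fin 4),(0:ZMod 5)) (2,0) := h10.trans (SimpleGraph.Adj.reachable (by decide))
  have h24 : dodecahedral.Reachable ((0:Fin 4),(0:ZMod 5)) (2,4) := h10.trans (SimpleGraph.Adj.reachable (by decide))
  have h12 : dodecahedral.Reachable ((0:Fin 4),(0:ZMod 5)) (1,2) := h02.trans (SimpleGraph.Adj.reachable (by decide))
  have h21 : dodecahedral.Reachable ((0:Fin 4),(0:ZMod 5)) (2,1) := h11.trans (SimpleGraph.Adj.reachable (by decide))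
  have h13 : dodecahedral.Reachable ((0:Fin 4),(0:ZMod 5)) (1,3) := h03.trans (SimpleGraph.Adj.reachable (by decide))
  have h23 : dodecahedral.Reachable ((0:Fin 4),(0:ZMod 5)) (2,3) := h14.trans (SimpleGraph.Adj.reachable (by decide))
  have h30 : dodecahedral.Reachable ((0:Fin 4),(0:ZMod 5)) (3,0) := h20.trans (SimpleGraph.Adj.reachable (by decide))
  have h34 : dodecahedral.Reachable ((0:Fin 4),(0:ZMod 5)) (3,4) := h24.trans (SimpleGraph.Adj.reachable (by decide))
  have h22 : dodecahedral.Reachable ((0:Fin 4),(0:ZMod 5)) (2,2) := h12.trans (SimpleGraph.Adj.reachable (by decide))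
  have h31 : dodecahedral.Reachable ((0:Fin 4),(0:ZMod 5)) (3,1) := h21.trans (SimpleGraph.Adj.reachable (by decide))
  have h33 : dodecahedral.Reachable ((0:Fin 4),(0:ZMod 5)) (3,3) := h23.trans (SimpleGraph.Adj.reachable (by decide))
  have h32 : dodecahedral.Reachable ((0:Fin 4),(0:ZMod 5)) (3,2) := h22.trans (SimpleGraph.Adj.reachable (by decide))
  intro v
  fin_cases v <;> assumption

lemma preconn : dodecahedral.Preconnected := fun u v => (reach_base u).symm.trans (reach_base v)

lemma lip_walk {f : VD → ℕ} (hf : ∀ u v, dodecahedral.Adj u v → f u ≤ f v + 1)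
    {u v : VD} (w : dodecahedral.Walk u v) : f u ≤ f v + w.length := by
  induction w with
  | nil => simp
  | cons h p ih =>
    have h1 := hf _ _ h
    rw [SimpleGraph.Walk.length_cons]
    omega

lemma lip_dist {f : VD → ℕ} (hf : ∀ u v, dodecahedral.Adj u v → f u ≤ f v + 1)
    (u v : VD) : f u ≤ f v + dodecahedral.dist u v := by
  obtain ⟨w, hw⟩ := (preconn u v).exists_walk_length_eq_dist
  exact hw ▸ lip_walk hf w

lemma dist_auto (e : VD ≃ VD) (he : ∀ u v, dodecahedral.Adj (e u) (e v) ↔ dodecahedral.Adj u v)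
    (u v : VD) : dodecahedral.dist (e u) (e v) = dodecahedral.dist u v := by
  have key : ∀ (e : VD ≃ VD),
      (∀ u v, dodecahedral.Adj (e u) (e v) ↔ dodecahedral.Adj u v) →
      ∀ u v, dodecahedral.dist (e u) (e v) ≤ dodecahedral.dist u v := by
    intro e he u v
    obtain ⟨w, hw⟩ := (preconn u v).exists_walk_length_eq_dist
    have hom : dodecahedral →g dodecahedral := ⟨e, fun h => (he _ _).mpr h⟩
    calc dodecahedral.dist (e u) (e v) ≤ (w.map ⟨e, fun h => (he _ _).mpr h⟩).length :=
          SimpleGraph.dist_le _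
      _ = w.length := SimpleGraph.Walk.length_map _ _
      _ = dodecahedral.dist u v := hw
  refine le_antisymm (key e he u v) ?_
  have he' : ∀ u v, dodecahedral.Adj (e.symm u) (e.symm v) ↔ dodecahedral.Adj u v := by
    intro u v
    conv_rhs => rw [← e.apply_symm_apply u, ← e.apply_symm_apply v]
    exact (he _ _).symm
  have := key e.symm he' (e u) (e v)
  simpa using this
lemma degree_filter : ∀ v : VD, (Finset.univ.filter (dodecahedral.Adj v)).card = 3 := by decide

lemma degree_eq (v : VD) : dodecahedral.degree v = 3 := by
  have h : dodecahedral.neighborFinset v = Finset.univ.filter (dodecahedral.Adj v) := by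
    ext z; simp [SimpleGraph.mem_neighborFinset]
  rw [← SimpleGraph.card_neighborFinset_eq_degree, h, degree_filter]


section W1lemmas
variable {V : Type*} (G : SimpleGraph V)

lemma W1_le_comm (μ1 μ2 : V → ℝ≥0∞) : W1 G μ2 μ1 ≤ W1 G μ1 μ2 := by
  apply le_iInf
  rintro ⟨π, hb, hr, hc⟩
  have plan : IsTransportPlan μ2 μ1 (fun u v => π v u) := ⟨fun u v => hb v u, hc, hr⟩
  refine le_trans (iInf_le _ ⟨_, plan⟩) (le_of_eq ?_)
  have key := Equiv.tsum_eq (Equiv.prodComm V V)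
    (fun q : V × V => (G.dist q.1 q.2 : ℝ≥0∞) * π q.2 q.1)
  simp only [Equiv.prodComm_apply, Prod.fst_swap, Prod.snd_swap] at key
  rw [← key]
  exact tsum_congr fun q => by rw [SimpleGraph.dist_comm]

lemma W1_comm (μ1 μ2 : V → ℝ≥0∞) : W1 G μ1 μ2 = W1 G μ2 μ1 :=
  le_antisymm (W1_le_comm G μ2 μ1) (W1_le_comm G μ1 μ2)

lemma W1_comp_le (e : V ≃ V) (hd : ∀ u v, G.dist (e u) (e v) = G.dist u v)
    (μ1 μ2 : V → ℝ≥0∞) : W1 G (μ1 ∘ e) (μ2 ∘ e) ≤ W1 G μ1 μ2 := by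
  apply le_iInf
  rintro ⟨π, hb, hr, hc⟩
  have plan : IsTransportPlan (μ1 ∘ e) (μ2 ∘ e) (fun u v => π (e u) (e v)) := by
    refine ⟨fun u v => hb _ _, fun u => ?_, fun v => ?_⟩
    · rw [Equiv.tsum_eq e (fun v => π (e u) v)]; exact hr (e u)
    · rw [Equiv.tsum_eq e (fun u => π u (e v))]; exact hc (e v)
  refine le_trans (iInf_le _ ⟨_, plan⟩) (le_of_eq ?_)
  have key := Equiv.tsum_eq (e.prodCongr e)
    (fun q : V × V => (G.dist q.1 q.2 : ℝ≥0∞) * π q.1 q.2)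
  simp only [Equiv.prodCongr_apply, Prod.map] at key
  rw [← key]
  exact tsum_congr fun q => by rw [hd]

lemma W1_comp (e : V ≃ V) (hd : ∀ u v, G.dist (e u) (e v) = G.dist u v)
    (μ1 μ2 : V → ℝ≥0∞) : W1 G (μ1 ∘ e) (μ2 ∘ e) = W1 G μ1 μ2 := by
  refine le_antisymm (W1_comp_le G e hd μ1 μ2) ?_
  have hd' : ∀ u v, G.dist (e.symm u) (e.symm v) = G.dist u v := fun u v => by
    conv_rhs => rw [← e.apply_symm_apply u, ← e.apply_symm_apply v]
    exact (hd _ _).symm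
  have h := W1_comp_le G e.symm hd' (μ1 ∘ e) (μ2 ∘ e)
  have h1 : (μ1 ∘ e) ∘ e.symm = μ1 := by funext z; simp
  have h2 : (μ2 ∘ e) ∘ e.symm = μ2 := by funext z; simp
  rwa [h1, h2] at h

end W1lemmas


lemma arith1 : ((1 : ℝ≥0∞) - 4⁻¹) / 3 = 4⁻¹ := by
  have h : (1 : ℝ≥0∞) = 3/4 + 4⁻¹ := by
    rw [← one_div, ENNReal.div_add_div_same]
    have h31 : ((3:ℝ≥0∞) + 1) = 4 := by norm_num
    rw [h31]
    exact (ENNReal.div_self (by norm_num) (by norm_num)).symm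
  have h34 : (1 : ℝ≥0∞) - 4⁻¹ = 3/4 :=
    ENNReal.sub_eq_of_eq_add (by norm_num : (4:ℝ≥0∞)⁻¹ ≠ ⊤) h
  rw [h34, div_eq_mul_inv, div_eq_mul_inv, mul_comm (3:ℝ≥0∞) _, mul_assoc,
    ENNReal.mul_inv_cancel (by norm_num) (by norm_num), mul_one]

def suppF (x : VD) : VD → ℕ := fun u => if u = x ∨ dodecahedral.Adj x u then 1 else 0

lemma mu_eq (x : VD) : muMeasure dodecahedral (1/4) x =
    fun z => (suppF x z : ℝ≥0∞) * 4⁻¹ := by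
  funext z
  by_cases h1 : z = x
  · simp [muMeasure, suppF, h1]
  · by_cases h2 : dodecahedral.Adj x z
    · simp [muMeasure, suppF, h1, h2, degree_eq, arith1]
    · simp [muMeasure, suppF, h1, h2]

lemma mu_auto (g : VD ≃ VD) (hg : ∀ u v, dodecahedral.Adj (g u) (g v) ↔ dodecahedral.Adj u v)
    (x : VD) : muMeasure dodecahedral (1/4) (g x) = (muMeasure dodecahedral (1/4) x) ∘ g.symm := by
  funext z
  rw [mu_eq, mu_eq]
  simp only [Function.comp_apply]
  have h1 : z = g x ↔ g.symm z = x := by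
    rw [Equiv.symm_apply_eq]
  have h2 : dodecahedral.Adj (g x) z ↔ dodecahedral.Adj x (g.symm z) := by
    conv_lhs => rw [← g.apply_symm_apply z]
    exact hg _ _
  have hs : suppF (g x) z = suppF x (g.symm z) := by
    unfold suppF
    exact if_congr (or_congr h1 h2) rfl rfl
  rw [hs]

lemma W1_auto (g : VD ≃ VD) (hg : ∀ u v, dodecahedral.Adj (g u) (g v) ↔ dodecahedral.Adj u v)
    (x y : VD) :
    W1 dodecahedral (muMeasure dodecahedral (1/4) (g x)) (muMeasure dodecahedral (1/4) (g y)) =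
    W1 dodecahedral (muMeasure dodecahedral (1/4) x) (muMeasure dodecahedral (1/4) y) := by
  rw [mu_auto g hg, mu_auto g hg]
  have hg' : ∀ u v, dodecahedral.Adj (g.symm u) (g.symm v) ↔ dodecahedral.Adj u v := fun u v => by
    conv_rhs => rw [← g.apply_symm_apply u, ← g.apply_symm_apply v]
    exact (hg _ _).symm
  exact W1_comp dodecahedral g.symm (dist_auto g.symm hg') _ _

def x₀ : VD := ((0:Fin 4),(0:ZMod 5))
def y₀ : VD := ((0:Fin 4),(1:ZMod 5))

def TMap : VD → VD := fun u =>
  if u = ((0:Fin 4),(0:ZMod 5)) then ((0:Fin 4),(0:ZMod 5)) else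
  if u = (0,1) then (0,1) else
  if u = (0,4) then (0,2) else
  if u = (1,0) then (1,1) else u

noncomputable def pi0 : VD → VD → ℝ≥0∞ := fun u v =>
  muMeasure dodecahedral (1/4) x₀ u * (if v = TMap u then 1 else 0)

lemma tsum_table (g h : VD → ℕ) :
    ∑' u : VD, (g u : ℝ≥0∞) * ((h u : ℝ≥0∞) * 4⁻¹) =
    ((∑ u : VD, g u * h u : ℕ) : ℝ≥0∞) * 4⁻¹ := by
  rw [tsum_fintype, Nat.cast_sum, Finset.sum_mul]
  exact Finset.sum_congr rfl fun u _ => by push_cast; ring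

lemma suppF_le_one (x u : VD) : (suppF x u : ℝ≥0∞) ≤ 1 := by
  unfold suppF; split_ifs <;> simp

lemma scol : ∀ v : VD, (∑ u : VD, suppF x₀ u * (if v = TMap u then 1 else 0)) = suppF y₀ v := by
  decide

lemma pi0_plan : IsTransportPlan (muMeasure dodecahedral (1/4) x₀)
    (muMeasure dodecahedral (1/4) y₀) pi0 := by
  refine ⟨fun u v => ?_, fun u => ?_, fun v => ?_⟩
  · unfold pi0
    have h1 : muMeasure dodecahedral (1/4) x₀ u ≤ 1 := by
      rw [mu_eq]
      calc (suppF x₀ u : ℝ≥0∞) * 4⁻¹ ≤ 1 * 1 :=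
        mul_le_mul' (suppF_le_one _ _) (by norm_num)
      _ = 1 := one_mul 1
    have h2 : (if v = TMap u then (1:ℝ≥0∞) else 0) ≤ 1 := by split_ifs <;> simp
    calc muMeasure dodecahedral (1/4) x₀ u * (if v = TMap u then (1:ℝ≥0∞) else 0) ≤ 1 * 1 :=
        mul_le_mul' h1 h2
      _ = 1 := one_mul 1
  · unfold pi0
    rw [ENNReal.tsum_mul_left, tsum_ite_eq, mul_one]
  · unfold pi0
    have hcongr : ∀ u : VD, muMeasure dodecahedral (1/4) x₀ u * (if v = TMap u then (1:ℝ≥0∞) else 0)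
        = ((suppF x₀ u : ℕ) : ℝ≥0∞) * ((((if v = TMap u then 1 else 0 : ℕ)) : ℝ≥0∞) * 4⁻¹) := by
      intro u; rw [mu_eq]; push_cast; ring
    rw [tsum_congr hcongr, tsum_table, scol, mu_eq]

lemma dist_04_02 : dodecahedral.dist ((0:Fin 4),(4:ZMod 5)) ((0:Fin 4),(2:ZMod 5)) ≤ 2 := by
  have h1 : dodecahedral.Adj ((0:Fin 4),(4:ZMod 5)) ((0:Fin 4),(3:ZMod 5)) := by decide
  have h2 : dodecahedral.Adj ((0:Fin 4),(3:ZMod 5)) ((0:Fin 4),(2:ZMod 5)) := by decide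
  simpa using SimpleGraph.dist_le (SimpleGraph.Walk.cons h1 (SimpleGraph.Walk.cons h2 SimpleGraph.Walk.nil))

lemma dist_10_11 : dodecahedral.dist ((1:Fin 4),(0:ZMod 5)) ((1:Fin 4),(1:ZMod 5)) ≤ 2 := by
  have h1 : dodecahedral.Adj ((1:Fin 4),(0:ZMod 5)) ((2:Fin 4),(0:ZMod 5)) := by decide
  have h2 : dodecahedral.Adj ((2:Fin 4),(0:ZMod 5)) ((1:Fin 4),(1:ZMod 5)) := by decide
  simpa using SimpleGraph.dist_le (SimpleGraph.Walk.cons h1 (SimpleGraph.Walk.cons h2 SimpleGraph.Walk.nil))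

def BMap : VD → ℕ := fun u => if u = ((0:Fin 4),(4:ZMod 5)) ∨ u = ((1:Fin 4),(0:ZMod 5)) then 2 else 0

lemma cost_pi0_le : ∑' q : VD × VD, (dodecahedral.dist q.1 q.2 : ℝ≥0∞) * pi0 q.1 q.2 ≤ 1 := by
  rw [ENNReal.tsum_prod']
  dsimp only
  have inner : ∀ u : VD, ∑' v : VD, (dodecahedral.dist u v : ℝ≥0∞) * pi0 u v
      = (dodecahedral.dist u (TMap u) : ℝ≥0∞) * muMeasure dodecahedral (1/4) x₀ u := by
    intro u
    have h : ∀ v : VD, (dodecahedral.dist u v : ℝ≥0∞) * pi0 u v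
        = (if v = TMap u then (dodecahedral.dist u (TMap u) : ℝ≥0∞) * muMeasure dodecahedral (1/4) x₀ u else 0) := by
      intro v
      unfold pi0
      by_cases hv : v = TMap u
      · simp [hv]
      · simp [hv]
    rw [tsum_congr h, tsum_ite_eq]
  rw [tsum_congr inner]
  have point : ∀ u : VD, (dodecahedral.dist u (TMap u) : ℝ≥0∞) * muMeasure dodecahedral (1/4) x₀ u
      ≤ ((BMap u : ℕ) : ℝ≥0∞) * (((1:ℕ) : ℝ≥0∞) * 4⁻¹) := by
    intro u
    have hcases : u = x₀ ∨ u = y₀ ∨ u = ((0:Fin 4),(4:ZMod 5)) ∨ u = ((1:Fin 4),(0:ZMod 5))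
        ∨ suppF x₀ u = 0 := by revert u; decide
    rcases hcases with h | h | h | h | h
    · subst h
      have : TMap x₀ = x₀ := by decide
      rw [this, SimpleGraph.dist_self]
      simp
    · subst h
      have : TMap y₀ = y₀ := by decide
      rw [this, SimpleGraph.dist_self]
      simp
    · subst h
      have ht : TMap ((0:Fin 4),(4:ZMod 5)) = ((0:Fin 4),(2:ZMod 5)) := by decide
      have hB : BMap ((0:Fin 4),(4:ZMod 5)) = 2 := by decide
      have hs : suppF x₀ ((0:Fin 4),(4:ZMod 5)) = 1 := by decide
      rw [ht, hB, mu_eq]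
      simp only [hs]
      refine mul_le_mul' ?_ (by norm_num)
      exact_mod_cast dist_04_02
    · subst h
      have ht : TMap ((1:Fin 4),(0:ZMod 5)) = ((1:Fin 4),(1:ZMod 5)) := by decide
      have hB : BMap ((1:Fin 4),(0:ZMod 5)) = 2 := by decide
      have hs : suppF x₀ ((1:Fin 4),(0:ZMod 5)) = 1 := by decide
      rw [ht, hB, mu_eq]
      simp only [hs]
      refine mul_le_mul' ?_ (by norm_num)
      exact_mod_cast dist_10_11
    · rw [mu_eq]
      simp [h]
  calc ∑' u : VD, (dodecahedral.dist u (TMap u) : ℝ≥0∞) * muMeasure dodecahedral (1/4) x₀ u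
      ≤ ∑' u : VD, ((BMap u : ℕ) : ℝ≥0∞) * (((1:ℕ) : ℝ≥0∞) * 4⁻¹) := Summable.tsum_le_tsum point ENNReal.summable ENNReal.summable
    _ = ((∑ u : VD, BMap u * 1 : ℕ) : ℝ≥0∞) * 4⁻¹ := tsum_table _ _
    _ = 1 := by
        have : (∑ u : VD, BMap u * 1 : ℕ) = 4 := by decide
        rw [this]
        have h4 : ((4:ℕ) : ℝ≥0∞) = 4 := by norm_num
        rw [h4]
        exact ENNReal.mul_inv_cancel (by norm_num) (by norm_num)

lemma cost_lower (π : VD → VD → ℝ≥0∞)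
    (hπ : IsTransportPlan (muMeasure dodecahedral (1/4) x₀) (muMeasure dodecahedral (1/4) y₀) π) :
    1 ≤ ∑' q : VD × VD, (dodecahedral.dist q.1 q.2 : ℝ≥0∞) * π q.1 q.2 := by
  obtain ⟨hb, hr, hc⟩ := hπ
  have point : ∀ q : VD × VD, (fL q.1 : ℝ≥0∞) * π q.1 q.2 ≤
      (dodecahedral.dist q.1 q.2 : ℝ≥0∞) * π q.1 q.2 + (fL q.2 : ℝ≥0∞) * π q.1 q.2 := by
    rintro ⟨u, v⟩
    have hle : (fL u : ℝ≥0∞) ≤ (dodecahedral.dist u v : ℝ≥0∞) + (fL v : ℝ≥0∞) := by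
      have h := lip_dist fL_lip u v
      have h2 : (fL u : ℝ≥0∞) ≤ ((fL v + dodecahedral.dist u v : ℕ) : ℝ≥0∞) :=
        Nat.cast_le.mpr h
      rw [Nat.cast_add, add_comm] at h2
      exact h2
    calc (fL u : ℝ≥0∞) * π u v
        ≤ ((dodecahedral.dist u v : ℝ≥0∞) + (fL v : ℝ≥0∞)) * π u v := mul_le_mul_left hle _
      _ = _ := add_mul _ _ _
  have hL : ∑' q : VD × VD, (fL q.1 : ℝ≥0∞) * π q.1 q.2 = (5 : ℝ≥0∞) * 4⁻¹ := by
    rw [ENNReal.tsum_prod']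
    dsimp only
    have inner : ∀ u : VD, ∑' v : VD, (fL u : ℝ≥0∞) * π u v
        = (fL u : ℝ≥0∞) * muMeasure dodecahedral (1/4) x₀ u := by
      intro u; rw [ENNReal.tsum_mul_left, hr u]
    rw [tsum_congr inner]
    simp only [mu_eq]
    rw [tsum_table]
    have : (∑ u : VD, fL u * suppF x₀ u) = 5 := by decide
    rw [this]
    norm_num
  have hR : ∑' q : VD × VD, (fL q.2 : ℝ≥0∞) * π q.1 q.2 = (4 : ℝ≥0∞)⁻¹ := by
    rw [ENNReal.tsum_prod']
    dsimp only
    rw [ENNReal.tsum_comm]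
    have inner : ∀ v : VD, ∑' u : VD, (fL v : ℝ≥0∞) * π u v
        = (fL v : ℝ≥0∞) * muMeasure dodecahedral (1/4) y₀ v := by
      intro v; rw [ENNReal.tsum_mul_left, hc v]
    rw [tsum_congr inner]
    simp only [mu_eq]
    rw [tsum_table]
    have : (∑ u : VD, fL u * suppF y₀ u) = 1 := by decide
    rw [this]
    norm_num
  have hsum : ∑' q : VD × VD, (fL q.1 : ℝ≥0∞) * π q.1 q.2
      ≤ (∑' q : VD × VD, (dodecahedral.dist q.1 q.2 : ℝ≥0∞) * π q.1 q.2)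
        + ∑' q : VD × VD, (fL q.2 : ℝ≥0∞) * π q.1 q.2 :=
    (Summable.tsum_le_tsum point ENNReal.summable ENNReal.summable).trans_eq ENNReal.tsum_add
  rw [hL, hR] at hsum
  have h5 : (5 : ℝ≥0∞) * 4⁻¹ = 1 + (4 : ℝ≥0∞)⁻¹ := by
    rw [show (5:ℝ≥0∞) = 4 + 1 from by norm_num, add_mul,
      ENNReal.mul_inv_cancel (by norm_num) (by norm_num), one_mul]
  rw [h5] at hsum
  have hfin : (4 : ℝ≥0∞)⁻¹ ≠ ⊤ := by norm_num
  exact (ENNReal.add_le_add_iff_right hfin).mp hsum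

lemma rep : W1 dodecahedral (muMeasure dodecahedral (1/4) x₀)
    (muMeasure dodecahedral (1/4) y₀) = 1 := by
  unfold W1
  refine le_antisymm ((iInf_le _ ⟨pi0, pi0_plan⟩).trans cost_pi0_le)
    (le_iInf fun π => cost_lower π.1 π.2)

lemma key1 (g : VD ≃ VD) (hg : ∀ u v, dodecahedral.Adj (g u) (g v) ↔ dodecahedral.Adj u v)
    {x y : VD} (hx : g x₀ = x) (hy : g y₀ = y) :
    W1 dodecahedral (muMeasure dodecahedral (1/4) x) (muMeasure dodecahedral (1/4) y) = 1 := by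
  subst hx; subst hy
  rw [W1_auto g hg x₀ y₀]
  exact rep

lemma key2 (g : VD ≃ VD) (hg : ∀ u v, dodecahedral.Adj (g u) (g v) ↔ dodecahedral.Adj u v)
    {x y : VD} (hx : g x₀ = y) (hy : g y₀ = x) :
    W1 dodecahedral (muMeasure dodecahedral (1/4) x) (muMeasure dodecahedral (1/4) y) = 1 := by
  subst hx; subst hy
  rw [W1_comm, W1_auto g hg x₀ y₀]
  exact rep

lemma he_trans {e1 e2 : VD ≃ VD}
    (h1 : ∀ u v, dodecahedral.Adj (e1 u) (e1 v) ↔ dodecahedral.Adj u v)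
    (h2 : ∀ u v, dodecahedral.Adj (e2 u) (e2 v) ↔ dodecahedral.Adj u v) :
    ∀ u v, dodecahedral.Adj ((e1.trans e2) u) ((e1.trans e2) v) ↔ dodecahedral.Adj u v := by
  intro u v
  simp only [Equiv.trans_apply]
  rw [h2, h1]

def gS1 (k : ZMod 5) : VD ≃ VD := (rE.trans rE).trans (rotE k)
def gB (k : ZMod 5) : VD ≃ VD := ((rE.trans rE).trans (rotE 4)).trans (rE.trans (rotE k))
def gC (k : ZMod 5) : VD ≃ VD := (gB k).trans sigE
def gS2 (k : ZMod 5) : VD ≃ VD := (gS1 k).trans sigE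
def gD (k : ZMod 5) : VD ≃ VD := (rotE k).trans sigE

lemma heS1 (k : ZMod 5) : ∀ u v, dodecahedral.Adj (gS1 k u) (gS1 k v) ↔ dodecahedral.Adj u v :=
  he_trans (he_trans he_r he_r) (he_rot k)
lemma heB (k : ZMod 5) : ∀ u v, dodecahedral.Adj (gB k u) (gB k v) ↔ dodecahedral.Adj u v :=
  he_trans (he_trans (he_trans he_r he_r) (he_rot 4)) (he_trans he_r (he_rot k))
lemma heC (k : ZMod 5) : ∀ u v, dodecahedral.Adj (gC k u) (gC k v) ↔ dodecahedral.Adj u v :=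
  he_trans (heB k) he_sig
lemma heS2 (k : ZMod 5) : ∀ u v, dodecahedral.Adj (gS2 k u) (gS2 k v) ↔ dodecahedral.Adj u v :=
  he_trans (heS1 k) he_sig
lemma heD (k : ZMod 5) : ∀ u v, dodecahedral.Adj (gD k u) (gD k v) ↔ dodecahedral.Adj u v :=
  he_trans (he_rot k) he_sig

lemma rotE_apply (k : ZMod 5) (p : VD) : rotE k p = (p.1, p.2 + k) := rfl

lemma rotE_x (k : ZMod 5) : rotE k x₀ = ((0:Fin 4), k) := by
  rw [rotE_apply]; simp [x₀]
lemma rotE_y (k : ZMod 5) : rotE k y₀ = ((0:Fin 4), k + 1) := by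
  rw [rotE_apply]; simp [y₀, add_comm]

lemma sigE_apply (p : VD) : sigE p =
    (if p.1 = 0 then ((3:Fin 4), p.2) else if p.1 = 1 then (2, p.2)
      else if p.1 = 2 then (1, p.2 + 1) else (0, p.2 + 1)) := rfl

lemma gS1_x (k : ZMod 5) : gS1 k x₀ = ((0:Fin 4), k) := by
  show rotE k (rE (rE x₀)) = _
  rw [show rE (rE x₀) = x₀ from by decide, rotE_x]
lemma gS1_y (k : ZMod 5) : gS1 k y₀ = ((1:Fin 4), k) := by
  show rotE k (rE (rE y₀)) = _
  rw [show rE (rE y₀) = ((1:Fin 4),(0:ZMod 5)) from by decide, rotE_apply]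
  simp
lemma gB_x (k : ZMod 5) : gB k x₀ = ((1:Fin 4), k) := by
  show rotE k (rE (rotE 4 (rE (rE x₀)))) = _
  rw [show rE (rotE (4:ZMod 5) (rE (rE x₀))) = ((1:Fin 4),(0:ZMod 5)) from by decide, rotE_apply]
  simp
lemma gB_y (k : ZMod 5) : gB k y₀ = ((2:Fin 4), k) := by
  show rotE k (rE (rotE 4 (rE (rE y₀)))) = _
  rw [show rE (rotE (4:ZMod 5) (rE (rE y₀))) = ((2:Fin 4),(0:ZMod 5)) from by decide, rotE_apply]
  simp
lemma gC_x (k : ZMod 5) : gC k x₀ = ((2:Fin 4), k) := by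
  show sigE (gB k x₀) = _
  rw [gB_x, sigE_apply]
  simp
lemma gC_y (k : ZMod 5) : gC k y₀ = ((1:Fin 4), k + 1) := by
  show sigE (gB k y₀) = _
  rw [gB_y, sigE_apply]
  simp
lemma gS2_x (k : ZMod 5) : gS2 k x₀ = ((3:Fin 4), k) := by
  show sigE (gS1 k x₀) = _
  rw [gS1_x, sigE_apply]
  simp
lemma gS2_y (k : ZMod 5) : gS2 k y₀ = ((2:Fin 4), k) := by
  show sigE (gS1 k y₀) = _
  rw [gS1_y, sigE_apply]
  simp
lemma gD_x (k : ZMod 5) : gD k x₀ = ((3:Fin 4), k) := by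
  show sigE (rotE k x₀) = _
  rw [rotE_x, sigE_apply]
  simp
lemma gD_y (k : ZMod 5) : gD k y₀ = ((3:Fin 4), k + 1) := by
  show sigE (rotE k y₀) = _
  rw [rotE_y, sigE_apply]
  simp

theorem dodecahedral_ricciFlat (x y : Fin 4 × ZMod 5) (hxy : dodecahedral.Adj x y) :
    W1 dodecahedral (muMeasure dodecahedral (1/4) x) (muMeasure dodecahedral (1/4) y) = 1 := by
  obtain ⟨hne, hrel⟩ := (adj_iff x y).mp hxy
  obtain ⟨x1, x2⟩ := x
  obtain ⟨y1, y2⟩ := y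
  unfold dRel at hrel
  dsimp only at hrel
  rcases hrel with (⟨h1, h2, h3⟩ | ⟨h1, h2, h3⟩ | ⟨h1, h2, h3⟩ | ⟨h1, h2, h3⟩ | ⟨h1, h2, h3⟩ | ⟨h1, h2, h3⟩) |
    (⟨h1, h2, h3⟩ | ⟨h1, h2, h3⟩ | ⟨h1, h2, h3⟩ | ⟨h1, h2, h3⟩ | ⟨h1, h2, h3⟩ | ⟨h1, h2, h3⟩)
  · subst h1; subst h2; subst h3
    exact key1 (rotE _) (he_rot _) (rotE_x _) (rotE_y _)
  · subst h1; subst h2; subst h3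
    exact key1 (gS1 _) (heS1 _) (gS1_x _) (gS1_y _)
  · subst h1; subst h2; subst h3
    exact key1 (gB _) (heB _) (gB_x _) (gB_y _)
  · subst h1; subst h2; subst h3
    exact key1 (gC _) (heC _) (gC_x _) (gC_y _)
  · subst h1; subst h2; subst h3
    exact key2 (gS2 _) (heS2 _) (gS2_x _) (gS2_y _)
  · subst h1; subst h2; subst h3
    exact key1 (gD _) (heD _) (gD_x _) (gD_y _)
  · subst h1; subst h2; subst h3
    exact key2 (rotE _) (he_rot _) (rotE_x _) (rotE_y _)
  · subst h1; subst h2; subst h3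
    exact key2 (gS1 _) (heS1 _) (gS1_x _) (gS1_y _)
  · subst h1; subst h2; subst h3
    exact key2 (gB _) (heB _) (gB_x _) (gB_y _)
  · subst h1; subst h2; subst h3
    exact key2 (gC _) (heC _) (gC_x _) (gC_y _)
  · subst h1; subst h2; subst h3
    exact key1 (gS2 _) (heS2 _) (gS2_x _) (gS2_y _)
  · subst h1; subst h2; subst h3
    exact key2 (gD _) (heD _) (gD_x _) (gD_y _)

end RicciFlatCubic
end
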